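/- arXiv:0901.4872 — 14 statements merged into one kernel-verified Lean document; each statement's English description precedes it below -/
import Mathlib

section
/- Let V be a complex vector space with an s.i.p. [·,·] and associated norm ‖x‖ = √([x,x]). Then the following are equivalent: (i) V is a differentiable s.i.p. space, i.e. for all x, z ∈ V and all y ≠ 0 the limit [x,·]'_z(y) := lim_{λ→0, λ real} (Re[x, y+λz] − Re[x, y])/λ exists; (ii) the norm is twice Gâteaux differentiable, i.e. for all x, z ∈ V and all y ≠ 0 the limits ‖·‖'_x(y) := lim_{λ→0} (‖y+λx‖ − ‖y‖)/λ and ‖·‖''_{x,z}(y) := lim_{λ→0} (‖·‖'_x(y+λz) − ‖·‖'_x(y))/λ exist. Moreover, the limit in (i) is continuous as a function of y if and only if the second Gâteaux derivative in (ii) is continuous as a function of y. -/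
open Topology Filter

structure SIP (V : Type*) [AddCommGroup V] [Module ℂ V] where
  ip : V → V → ℂ
  nrm : V → ℝ
  hnrm : ∀ x, nrm x = Real.sqrt (ip x x).re
  h_add : ∀ x y z : V, ip (x + y) z = ip x z + ip y z
  h_sm1 : ∀ (c : ℂ) (x y : V), ip (c • x) y = c * ip x y
  h_pos : ∀ x : V, x ≠ 0 → 0 < (ip x x).re ∧ (ip x x).im = 0
  h_cs : ∀ x y : V, ‖ip x y‖ ^ 2 ≤ (ip x x).re * (ip y y).re
  h_sm2 : ∀ (c : ℂ) (x y : V), ip x (c • y) = (starRingEnd ℂ) c * ip x y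

namespace SIP

variable {V : Type*} [AddCommGroup V] [Module ℂ V] (S : SIP V)

lemma ip_zero_left (y : V) : S.ip 0 y = 0 := by
  have := S.h_sm1 0 0 y
  simpa using this

lemma ip_self_re_nonneg (x : V) : 0 ≤ (S.ip x x).re := by
  by_cases h : x = 0
  · simp [h, S.ip_zero_left]
  · exact (S.h_pos x h).1.le

lemma nrm_nonneg (x : V) : 0 ≤ S.nrm x := by
  rw [S.hnrm]; exact Real.sqrt_nonneg _

lemma nrm_zero : S.nrm 0 = 0 := by
  rw [S.hnrm]; simp [S.ip_zero_left]

lemma nrm_pos {x : V} (hx : x ≠ 0) : 0 < S.nrm x := by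
  rw [S.hnrm]; exact Real.sqrt_pos.2 (S.h_pos x hx).1

lemma ne_zero_of_nrm_pos {x : V} (hx : 0 < S.nrm x) : x ≠ 0 := by
  rintro rfl; rw [S.nrm_zero] at hx; exact lt_irrefl _ hx

lemma sq_nrm (x : V) : S.nrm x * S.nrm x = (S.ip x x).re := by
  rw [S.hnrm]; exact Real.mul_self_sqrt (S.ip_self_re_nonneg x)

lemma abs_ip_le (x y : V) : ‖S.ip x y‖ ≤ S.nrm x * S.nrm y := by
  have h := S.h_cs x y
  have h2 : ‖S.ip x y‖ ^ 2 ≤ (S.nrm x * S.nrm y) ^ 2 := by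
    calc ‖S.ip x y‖ ^ 2 ≤ (S.ip x x).re * (S.ip y y).re := h
    _ = (S.nrm x * S.nrm y) ^ 2 := by rw [← S.sq_nrm, ← S.sq_nrm]; ring
  nlinarith [norm_nonneg (S.ip x y), mul_nonneg (S.nrm_nonneg x) (S.nrm_nonneg y)]

lemma re_ip_le (x y : V) : (S.ip x y).re ≤ S.nrm x * S.nrm y :=
  le_trans (Complex.re_le_norm _) (S.abs_ip_le x y)

lemma nrm_smul_real (lam : ℝ) (x : V) : S.nrm ((lam : ℂ) • x) = |lam| * S.nrm x := by
  have h : S.ip ((lam:ℂ) • x) ((lam:ℂ) • x) = ((lam * lam : ℝ) : ℂ) * S.ip x x := by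
    rw [S.h_sm1, S.h_sm2]
    rw [Complex.conj_ofReal]
    push_cast
    ring
  rw [S.hnrm, h, Complex.re_ofReal_mul, Real.sqrt_mul (mul_self_nonneg lam),
    Real.sqrt_mul_self_eq_abs, ← S.hnrm]

lemma nrm_add_le (a b : V) : S.nrm (a + b) ≤ S.nrm a + S.nrm b := by
  rcases eq_or_lt_of_le (S.nrm_nonneg (a + b)) with h | h
  · rw [← h]; exact add_nonneg (S.nrm_nonneg a) (S.nrm_nonneg b)
  · have key : S.nrm (a+b) * S.nrm (a+b) ≤ (S.nrm a + S.nrm b) * S.nrm (a+b) := by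
      rw [S.sq_nrm, S.h_add]
      calc (S.ip a (a+b) + S.ip b (a+b)).re = (S.ip a (a+b)).re + (S.ip b (a+b)).re := by
            simp [Complex.add_re]
        _ ≤ S.nrm a * S.nrm (a+b) + S.nrm b * S.nrm (a+b) :=
            add_le_add (S.re_ip_le _ _) (S.re_ip_le _ _)
        _ = (S.nrm a + S.nrm b) * S.nrm (a+b) := by ring
    exact le_of_mul_le_mul_right key h

lemma abs_nrm_sub_le (a b : V) : |S.nrm a - S.nrm b| ≤ S.nrm (a - b) := by
  rw [abs_sub_le_iff]
  constructor
  · have := S.nrm_add_le (a - b) b; simpa using this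
  · have := S.nrm_add_le (b - a) a
    have h2 : S.nrm (b - a) = S.nrm (a - b) := by
      have : b - a = ((-1 : ℝ) : ℂ) • (a - b) := by push_cast; simp [neg_smul]
      rw [this, S.nrm_smul_real]; simp
    simp only [sub_add_cancel] at this
    linarith

lemma tendsto_of_diffquot {f : ℝ → ℝ} {c L : ℝ}
    (h : Tendsto (fun lam => (f lam - c) / lam) (𝓝[≠] 0) (𝓝 L)) :
    Tendsto f (𝓝[≠] 0) (𝓝 c) := by
  have hid : Tendsto (fun lam : ℝ => lam) (𝓝[≠] (0:ℝ)) (𝓝 0) :=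
    tendsto_id.mono_left nhdsWithin_le_nhds
  have h2 : Tendsto (fun lam => (f lam - c) / lam * lam) (𝓝[≠] 0) (𝓝 (L * 0)) := h.mul hid
  have h3 : Tendsto (fun lam => f lam - c) (𝓝[≠] 0) (𝓝 0) := by
    rw [mul_zero] at h2
    refine h2.congr' ?_
    filter_upwards [eventually_mem_nhdsWithin] with lam (hlam : lam ≠ 0)
    field_simp
  have := h3.add_const c
  simpa using this

lemma sip_line_eq {V : Type*} [AddCommGroup V] [Module ℂ V] (x y : V) (lam : ℝ) :
    (y + (lam:ℂ) • x) + ((-lam : ℝ) : ℂ) • x = y := by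
  have h : ((-lam : ℝ) : ℂ) = -(lam:ℂ) := by push_cast; ring
  rw [h, add_assoc, ← add_smul, add_neg_cancel, zero_smul, add_zero]

lemma re_ip_line (x y : V) (lam : ℝ) :
    (S.ip (y + (lam:ℂ) • x) y).re = (S.ip y y).re + lam * (S.ip x y).re := by
  rw [S.h_add, S.h_sm1]
  simp [Complex.add_re, Complex.re_ofReal_mul]

/-- Key inequality: `lam * Re[x,y] ≤ ‖y‖ (‖y+lam x‖ - ‖y‖)`. -/
lemma key_ineq (x y : V) (lam : ℝ) :
    lam * (S.ip x y).re ≤ S.nrm y * (S.nrm (y + (lam:ℂ) • x) - S.nrm y) := by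
  have h1 : (S.ip (y + (lam:ℂ) • x) y).re ≤ S.nrm (y + (lam:ℂ) • x) * S.nrm y :=
    S.re_ip_le _ _
  rw [S.re_ip_line] at h1
  have h2 : (S.ip y y).re = S.nrm y * S.nrm y := (S.sq_nrm y).symm
  nlinarith [h1, h2]

/-- Upper key inequality: `‖y+lam x‖(‖y+lam x‖-‖y‖) ≤ lam * Re[x, y+lam x]`. -/
lemma key_ineq' (x y : V) (lam : ℝ) :
    S.nrm (y + (lam:ℂ) • x) * (S.nrm (y + (lam:ℂ) • x) - S.nrm y) ≤
      lam * (S.ip x (y + (lam:ℂ) • x)).re := by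
  have h := S.key_ineq x (y + (lam:ℂ) • x) (-lam)
  rw [sip_line_eq] at h
  nlinarith [h]

/-- tendsto of `‖y + lam z‖` to `‖y‖`. -/
lemma nrm_line_tendsto (z y : V) :
    Tendsto (fun lam : ℝ => S.nrm (y + (lam:ℂ) • z)) (𝓝[≠] 0) (𝓝 (S.nrm y)) := by
  have hb : ∀ lam : ℝ, |S.nrm (y + (lam:ℂ) • z) - S.nrm y| ≤ |lam| * S.nrm z := by
    intro lam
    have h := S.abs_nrm_sub_le (y + (lam:ℂ) • z) y
    have h2 : (y + (lam:ℂ) • z) - y = (lam:ℂ) • z := by abel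
    rw [h2, S.nrm_smul_real] at h
    exact h
  have habs : Tendsto (fun lam : ℝ => |lam| * S.nrm z) (𝓝[≠] 0) (𝓝 0) := by
    have h1 : Tendsto (fun lam : ℝ => |lam|) (𝓝[≠] (0:ℝ)) (𝓝 0) := by
      have := (continuous_abs.tendsto (0:ℝ)).mono_left (nhdsWithin_le_nhds (s := {(0:ℝ)}ᶜ))
      simpa using this
    simpa using h1.mul_const (S.nrm z)
  have h0 : Tendsto (fun lam : ℝ => S.nrm (y + (lam:ℂ) • z) - S.nrm y) (𝓝[≠] 0) (𝓝 0) := by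
    rw [tendsto_zero_iff_abs_tendsto_zero]
    exact squeeze_zero (fun t => abs_nonneg _) (fun t => hb t) habs
  simpa using h0.add_const (S.nrm y)

/-- First Gâteaux derivative of the norm, given continuity of `Re[x, y + ·x]` at 0. -/
lemma norm_deriv {x y : V} (hy : y ≠ 0)
    (hcont : Tendsto (fun lam : ℝ => (S.ip x (y + (lam:ℂ) • x)).re) (𝓝[≠] 0)
      (𝓝 (S.ip x y).re)) :
    Tendsto (fun lam : ℝ => (S.nrm (y + (lam:ℂ) • x) - S.nrm y) / lam) (𝓝[≠] 0)
      (𝓝 ((S.ip x y).re / S.nrm y)) := by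
  have hg0 : 0 < S.nrm y := S.nrm_pos hy
  have hn := S.nrm_line_tendsto x y
  have hU : Tendsto (fun lam : ℝ => (S.ip x (y + (lam:ℂ) • x)).re / S.nrm (y + (lam:ℂ) • x))
      (𝓝[≠] 0) (𝓝 ((S.ip x y).re / S.nrm y)) := hcont.div hn hg0.ne'
  have hev : ∀ᶠ lam : ℝ in 𝓝[≠] 0, 0 < S.nrm (y + (lam:ℂ) • x) :=
    hn.eventually (eventually_gt_nhds hg0)
  have hkey : ∀ᶠ lam : ℝ in 𝓝[≠] 0,
      |(S.nrm (y + (lam:ℂ) • x) - S.nrm y) / lam - (S.ip x y).re / S.nrm y| ≤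
        |(S.ip x (y + (lam:ℂ) • x)).re / S.nrm (y + (lam:ℂ) • x) -
          (S.ip x y).re / S.nrm y| := by
    filter_upwards [hev, eventually_mem_nhdsWithin] with lam hpos (hne : lam ≠ 0)
    have p1 := S.key_ineq x y lam
    have p2 := S.key_ineq' x y lam
    rcases hne.lt_or_gt with hneg | hposl
    · have hml : (0:ℝ) < -lam := neg_pos.2 hneg
      have hrw : (S.nrm (y + (lam:ℂ) • x) - S.nrm y) / lam =
          (S.nrm y - S.nrm (y + (lam:ℂ) • x)) / (-lam) := by
        rw [div_neg, ← neg_div, neg_sub]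
      have a1 : (S.nrm y - S.nrm (y + (lam:ℂ) • x)) / (-lam) ≤ (S.ip x y).re / S.nrm y := by
        rw [div_le_div_iff₀ hml hg0]; nlinarith [p1]
      have a2 : (S.ip x (y + (lam:ℂ) • x)).re / S.nrm (y + (lam:ℂ) • x) ≤
          (S.nrm y - S.nrm (y + (lam:ℂ) • x)) / (-lam) := by
        rw [div_le_div_iff₀ hpos hml]; nlinarith [p2]
      rw [hrw]
      rw [abs_of_nonpos (by linarith)]
      have := neg_le_abs ((S.ip x (y + (lam:ℂ) • x)).re / S.nrm (y + (lam:ℂ) • x) -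
        (S.ip x y).re / S.nrm y)
      linarith
    · have a1 : (S.ip x y).re / S.nrm y ≤ (S.nrm (y + (lam:ℂ) • x) - S.nrm y) / lam := by
        rw [div_le_div_iff₀ hg0 hposl]; nlinarith [p1]
      have a2 : (S.nrm (y + (lam:ℂ) • x) - S.nrm y) / lam ≤
          (S.ip x (y + (lam:ℂ) • x)).re / S.nrm (y + (lam:ℂ) • x) := by
        rw [div_le_div_iff₀ hposl hpos]; nlinarith [p2]
      rw [abs_of_nonneg (by linarith)]
      have := le_abs_self ((S.ip x (y + (lam:ℂ) • x)).re / S.nrm (y + (lam:ℂ) • x) -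
        (S.ip x y).re / S.nrm y)
      linarith
  have habs : Tendsto (fun lam : ℝ =>
      |(S.nrm (y + (lam:ℂ) • x) - S.nrm y) / lam - (S.ip x y).re / S.nrm y|)
      (𝓝[≠] 0) (𝓝 0) := by
    refine squeeze_zero' (Eventually.of_forall fun t => abs_nonneg _) hkey ?_
    have h4 : Tendsto (fun lam : ℝ =>
        (S.ip x (y + (lam:ℂ) • x)).re / S.nrm (y + (lam:ℂ) • x) -
          (S.ip x y).re / S.nrm y) (𝓝[≠] 0) (𝓝 0) := by
      simpa using hU.sub_const ((S.ip x y).re / S.nrm y)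
    simpa [Function.comp_def] using (tendsto_zero_iff_abs_tendsto_zero _).1 h4
  have h3 : Tendsto (fun lam : ℝ =>
      (S.nrm (y + (lam:ℂ) • x) - S.nrm y) / lam - (S.ip x y).re / S.nrm y)
      (𝓝[≠] 0) (𝓝 0) :=
    (tendsto_zero_iff_abs_tendsto_zero _).2 (by simpa [Function.comp_def] using habs)
  simpa using h3.add_const ((S.ip x y).re / S.nrm y)

/-- If the norm has a directional derivative `M` at `y ≠ 0` in direction `x`, then
`Re[x,y] = ‖y‖ M`. -/
lemma re_eq_of_norm_deriv {x y : V} (hy : y ≠ 0) {M : ℝ}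
    (hq : Tendsto (fun lam : ℝ => (S.nrm (y + (lam:ℂ) • x) - S.nrm y) / lam)
      (𝓝[≠] 0) (𝓝 M)) :
    (S.ip x y).re = S.nrm y * M := by
  have hg0 : 0 < S.nrm y := S.nrm_pos hy
  have hsub1 : 𝓝[>] (0:ℝ) ≤ 𝓝[≠] 0 := nhdsWithin_mono _ (fun t ht => ne_of_gt ht)
  have hsub2 : 𝓝[<] (0:ℝ) ≤ 𝓝[≠] 0 := nhdsWithin_mono _ (fun t ht => ne_of_lt ht)
  have le1 : (S.ip x y).re / S.nrm y ≤ M := by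
    refine ge_of_tendsto (hq.mono_left hsub1) ?_
    filter_upwards [self_mem_nhdsWithin] with lam (hl : lam ∈ Set.Ioi (0:ℝ))
    have p1 := S.key_ineq x y lam
    rw [div_le_div_iff₀ hg0 hl]
    nlinarith [p1]
  have le2 : M ≤ (S.ip x y).re / S.nrm y := by
    refine le_of_tendsto (hq.mono_left hsub2) ?_
    filter_upwards [self_mem_nhdsWithin] with lam (hl : lam ∈ Set.Iio (0:ℝ))
    have p1 := S.key_ineq x y lam
    have hml : (0:ℝ) < -lam := neg_pos.2 hl
    have hrw : (S.nrm (y + (lam:ℂ) • x) - S.nrm y) / lam =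
        (S.nrm y - S.nrm (y + (lam:ℂ) • x)) / (-lam) := by
      rw [div_neg, ← neg_div, neg_sub]
    rw [hrw, div_le_div_iff₀ hml hg0]
    nlinarith [p1]
  have heq : (S.ip x y).re / S.nrm y = M := le_antisymm le1 le2
  field_simp at heq
  linarith [heq]

/-- Difference-quotient limit of `Re[x, y+·z]/‖y+·z‖`. -/
lemma quot_deriv {x z y : V} (hy : y ≠ 0) {Ls Mz : ℝ}
    (hsd : Tendsto (fun lam : ℝ =>
      ((S.ip x (y + (lam:ℂ) • z)).re - (S.ip x y).re) / lam) (𝓝[≠] 0) (𝓝 Ls))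
    (hdz : Tendsto (fun lam : ℝ => (S.nrm (y + (lam:ℂ) • z) - S.nrm y) / lam)
      (𝓝[≠] 0) (𝓝 Mz)) :
    Tendsto (fun lam : ℝ =>
      ((S.ip x (y + (lam:ℂ) • z)).re / S.nrm (y + (lam:ℂ) • z) -
        (S.ip x y).re / S.nrm y) / lam) (𝓝[≠] 0)
      (𝓝 ((Ls * S.nrm y - (S.ip x y).re * Mz) / (S.nrm y * S.nrm y))) := by
  have hg0 : 0 < S.nrm y := S.nrm_pos hy
  have hn := S.nrm_line_tendsto z y
  have hev : ∀ᶠ lam : ℝ in 𝓝[≠] 0, 0 < S.nrm (y + (lam:ℂ) • z) :=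
    hn.eventually (eventually_gt_nhds hg0)
  have num : Tendsto (fun lam : ℝ =>
      (((S.ip x (y + (lam:ℂ) • z)).re - (S.ip x y).re) / lam) * S.nrm y -
        (S.ip x y).re * ((S.nrm (y + (lam:ℂ) • z) - S.nrm y) / lam)) (𝓝[≠] 0)
      (𝓝 (Ls * S.nrm y - (S.ip x y).re * Mz)) :=
    (hsd.mul_const _).sub (hdz.const_mul _)
  have den : Tendsto (fun lam : ℝ => S.nrm (y + (lam:ℂ) • z) * S.nrm y) (𝓝[≠] 0)
      (𝓝 (S.nrm y * S.nrm y)) := hn.mul_const _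
  have hE := num.div den (by positivity)
  refine hE.congr' ?_
  filter_upwards [hev, eventually_mem_nhdsWithin] with lam hpos (hne : lam ≠ 0)
  have key : ∀ (f f0 g g0 lam : ℝ), lam ≠ 0 → g ≠ 0 → g0 ≠ 0 →
      ((f - f0)/lam * g0 - f0 * ((g - g0)/lam)) / (g * g0) = (f/g - f0/g0)/lam := by
    intros f f0 g g0 lam h1 h2 h3
    field_simp
    ring
  simp only [Pi.div_apply]
  exact key _ _ _ _ _ hne hpos.ne' (S.nrm_pos hy).ne'
end SIP


/-- For a complex s.i.p. space `(V, ip)` with associated norm `nrm x = √(Re [x,x])`: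
(i) differentiability of the s.i.p. (existence of `[x,·]'_z(y)` for all `x, z` and `y ≠ 0`)
is equivalent to (ii) the norm being twice Gâteaux differentiable; moreover, given the
derivative functions, the limit in (i) is continuous in `y` iff the second Gâteaux
derivative in (ii) is continuous in `y`. -/
theorem stmt_0 {V : Type*} [AddCommGroup V] [Module ℂ V] (ip : V → V → ℂ)
    (nrm : V → ℝ) (hnrm : ∀ x, nrm x = Real.sqrt (ip x x).re)
    (h_add : ∀ x y z : V, ip (x + y) z = ip x z + ip y z)
    (h_sm1 : ∀ (c : ℂ) (x y : V), ip (c • x) y = c * ip x y)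
    (h_pos : ∀ x : V, x ≠ 0 → 0 < (ip x x).re ∧ (ip x x).im = 0)
    (h_cs : ∀ x y : V, ‖ip x y‖ ^ 2 ≤ (ip x x).re * (ip y y).re)
    (h_sm2 : ∀ (c : ℂ) (x y : V), ip x (c • y) = (starRingEnd ℂ) c * ip x y) :
    ((∀ x z y : V, y ≠ 0 → ∃ L : ℝ,
        Tendsto (fun lam : ℝ =>
          ((ip x (y + (lam : ℂ) • z)).re - (ip x y).re) / lam) (𝓝[≠] 0) (𝓝 L))
      ↔
      (∃ D : V → V → ℝ,
        (∀ x y : V, y ≠ 0 →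
          Tendsto (fun lam : ℝ => (nrm (y + (lam : ℂ) • x) - nrm y) / lam)
            (𝓝[≠] 0) (𝓝 (D x y))) ∧
        (∀ x z y : V, y ≠ 0 → ∃ L2 : ℝ,
          Tendsto (fun lam : ℝ => (D x (y + (lam : ℂ) • z) - D x y) / lam)
            (𝓝[≠] 0) (𝓝 L2))))
    ∧
    (∀ (sD : V → V → V → ℝ) (D : V → V → ℝ) (D2 : V → V → V → ℝ),
      (∀ x z y : V, y ≠ 0 →
        Tendsto (fun lam : ℝ =>
          ((ip x (y + (lam : ℂ) • z)).re - (ip x y).re) / lam) (𝓝[≠] 0)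
          (𝓝 (sD x z y))) →
      (∀ x y : V, y ≠ 0 →
        Tendsto (fun lam : ℝ => (nrm (y + (lam : ℂ) • x) - nrm y) / lam)
          (𝓝[≠] 0) (𝓝 (D x y))) →
      (∀ x z y : V, y ≠ 0 →
        Tendsto (fun lam : ℝ => (D x (y + (lam : ℂ) • z) - D x y) / lam)
          (𝓝[≠] 0) (𝓝 (D2 x z y))) →
      ((∀ x z y : V, y ≠ 0 → ∀ ε > (0 : ℝ), ∃ δ > (0 : ℝ), ∀ y' : V,
          nrm (y' - y) < δ → |sD x z y' - sD x z y| < ε)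
        ↔
       (∀ x z y : V, y ≠ 0 → ∀ ε > (0 : ℝ), ∃ δ > (0 : ℝ), ∀ y' : V,
          nrm (y' - y) < δ → |D2 x z y' - D2 x z y| < ε))) := by
  classical
  set S : SIP V := ⟨ip, nrm, hnrm, h_add, h_sm1, h_pos, h_cs, h_sm2⟩ with hS
  constructor
  · -- Part 1: the equivalence
    constructor
    · -- (i) → (ii)
      intro hI
      refine ⟨fun x y => if y = 0 then 0 else (ip x y).re / nrm y, ?_, ?_⟩
      · intro x y hy
        obtain ⟨L, hL⟩ := hI x x y hy
        have hcont : Tendsto (fun lam : ℝ => (ip x (y + (lam:ℂ) • x)).re) (𝓝[≠] 0)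
            (𝓝 (ip x y).re) := SIP.tendsto_of_diffquot hL
        have h := S.norm_deriv hy hcont
        simp only [if_neg hy]
        exact h
      · intro x z y hy
        obtain ⟨Ls, hLs⟩ := hI x z y hy
        have hcz : Tendsto (fun lam : ℝ => (ip z (y + (lam:ℂ) • z)).re) (𝓝[≠] 0)
            (𝓝 (ip z y).re) := SIP.tendsto_of_diffquot (hI z z y hy).choose_spec
        have hdz : Tendsto (fun lam : ℝ => (nrm (y + (lam:ℂ) • z) - nrm y) / lam)
            (𝓝[≠] 0) (𝓝 ((ip z y).re / nrm y)) := S.norm_deriv hy hcz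
        have hq := S.quot_deriv hy hLs hdz
        refine ⟨(Ls * nrm y - (ip x y).re * ((ip z y).re / nrm y)) / (nrm y * nrm y), ?_⟩
        refine Tendsto.congr' ?_ hq
        have hev : ∀ᶠ lam : ℝ in 𝓝[≠] 0, 0 < nrm (y + (lam:ℂ) • z) :=
          (S.nrm_line_tendsto z y).eventually (eventually_gt_nhds (S.nrm_pos hy))
        filter_upwards [hev] with lam hpos
        have hne : y + (lam:ℂ) • z ≠ 0 := S.ne_zero_of_nrm_pos hpos
        simp only [if_neg hy, if_neg hne]
        rfl
    · -- (ii) → (i)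
      rintro ⟨D, hD1, hD2⟩ x z y hy
      have hre : ∀ (x w : V), w ≠ 0 → (ip x w).re = nrm w * D x w := fun x w hw =>
        S.re_eq_of_norm_deriv hw (hD1 x w hw)
      obtain ⟨L2, hL2⟩ := hD2 x z y hy
      have hA : Tendsto (fun lam : ℝ => D x (y + (lam:ℂ) • z)) (𝓝[≠] 0) (𝓝 (D x y)) :=
        SIP.tendsto_of_diffquot hL2
      refine ⟨D z y * D x y + nrm y * L2, ?_⟩
      have hT : Tendsto (fun lam : ℝ =>
          ((nrm (y + (lam:ℂ) • z) - nrm y) / lam) * D x (y + (lam:ℂ) • z) +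
            nrm y * ((D x (y + (lam:ℂ) • z) - D x y) / lam)) (𝓝[≠] 0)
          (𝓝 (D z y * D x y + nrm y * L2)) := ((hD1 z y hy).mul hA).add (hL2.const_mul _)
      refine Tendsto.congr' ?_ hT
      have hev : ∀ᶠ lam : ℝ in 𝓝[≠] 0, 0 < nrm (y + (lam:ℂ) • z) :=
        (S.nrm_line_tendsto z y).eventually (eventually_gt_nhds (S.nrm_pos hy))
      filter_upwards [hev, eventually_mem_nhdsWithin] with lam hpos (hlam : lam ≠ 0)
      have hne : y + (lam:ℂ) • z ≠ 0 := S.ne_zero_of_nrm_pos hpos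
      rw [hre x _ hne, hre x y hy]
      field_simp
      ring
  · -- Part 2: continuity transfer
    intro sD D D2 hsD hD1 hD2
    have hre : ∀ (x w : V), w ≠ 0 → (ip x w).re = nrm w * D x w := fun x w hw =>
      S.re_eq_of_norm_deriv hw (hD1 x w hw)
    have hgpos : ∀ w : V, w ≠ 0 → 0 < nrm w := fun w hw => S.nrm_pos hw
    -- the structural formula
    have hform : ∀ x z y : V, y ≠ 0 →
        sD x z y = nrm y * D2 x z y + D x y * D z y := by
      intro x z y hy
      have hg0 : 0 < nrm y := hgpos y hy
      have hq := S.quot_deriv hy (hsD x z y hy) (hD1 z y hy)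
      have hev : ∀ᶠ lam : ℝ in 𝓝[≠] 0, 0 < nrm (y + (lam:ℂ) • z) :=
        (S.nrm_line_tendsto z y).eventually (eventually_gt_nhds hg0)
      have hq2 : Tendsto (fun lam : ℝ => (D x (y + (lam:ℂ) • z) - D x y) / lam) (𝓝[≠] 0)
          (𝓝 ((sD x z y * nrm y - (ip x y).re * D z y) / (nrm y * nrm y))) := by
        refine Tendsto.congr' ?_ hq
        filter_upwards [hev] with lam hpos
        have hne : y + (lam:ℂ) • z ≠ 0 := S.ne_zero_of_nrm_pos hpos
        rw [hre x _ hne, hre x y hy]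
        rw [mul_div_cancel_left₀ _ hpos.ne', mul_div_cancel_left₀ _ hg0.ne']
      have huniq := tendsto_nhds_unique hq2 (hD2 x z y hy)
      rw [hre x y hy] at huniq
      have h2 := (div_eq_iff (by positivity : nrm y * nrm y ≠ 0)).1 huniq
      have h3 : sD x z y * nrm y = (nrm y * D2 x z y + D x y * D z y) * nrm y := by
        linear_combination h2
      exact mul_right_cancel₀ hg0.ne' h3
    letI : NormedAddCommGroup V := AddGroupNorm.toNormedAddCommGroup
      { toFun := nrm
        map_zero' := S.nrm_zero
        add_le' := S.nrm_add_le
        neg' := by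
          intro a
          have h : (-a : V) = ((-1 : ℝ) : ℂ) • a := by push_cast; simp
          have := S.nrm_smul_real (-1) a
          rw [← h] at this
          simpa using this
        eq_zero_of_map_eq_zero' := by
          intro a ha
          by_contra hne
          exact absurd ha (S.nrm_pos hne).ne' }
    have hcn : Continuous (nrm : V → ℝ) := continuous_norm
    have hiff : ∀ (f : V → ℝ) (y : V),
        (∀ ε > (0:ℝ), ∃ δ > (0:ℝ), ∀ y' : V, nrm (y' - y) < δ → |f y' - f y| < ε) ↔
          ContinuousAt f y := by
      intro f y
      rw [Metric.continuousAt_iff]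
      constructor
      · intro h ε hε
        obtain ⟨δ, hδ, hh⟩ := h ε hε
        refine ⟨δ, hδ, fun y' hy' => ?_⟩
        rw [Real.dist_eq]
        have hd : dist y' y = nrm (y' - y) := dist_eq_norm y' y
        exact hh y' (by rw [← hd]; exact hy')
      · intro h ε hε
        obtain ⟨δ, hδ, hh⟩ := h ε hε
        refine ⟨δ, hδ, fun y' hy' => ?_⟩
        have := hh (x := y') (by rw [dist_eq_norm]; exact hy')
        rwa [Real.dist_eq] at this
    -- continuity of y ↦ Re[x,y] at nonzero points
    have hRcont : ∀ (x y₀ : V), y₀ ≠ 0 → ContinuousAt (fun y' => (ip x y').re) y₀ := by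
      intro x y₀ hy₀
      have hg0 : 0 < nrm y₀ := hgpos y₀ hy₀
      rw [ContinuousAt, Metric.tendsto_nhds]
      intro ε hε
      have hsub1 : 𝓝[>] (0:ℝ) ≤ 𝓝[≠] 0 := nhdsWithin_mono _ (fun t ht => ne_of_gt ht)
      have hsub2 : 𝓝[<] (0:ℝ) ≤ 𝓝[≠] 0 := nhdsWithin_mono _ (fun t ht => ne_of_lt ht)
      have hre0 : nrm y₀ * D x y₀ = (ip x y₀).re := (hre x y₀ hy₀).symm
      have hTbase : Tendsto (fun lam : ℝ =>
          nrm y₀ * ((nrm (y₀ + (lam:ℂ) • x) - nrm y₀) / lam)) (𝓝[≠] 0)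
          (𝓝 ((ip x y₀).re)) := by
        have := (hD1 x y₀ hy₀).const_mul (nrm y₀)
        rwa [hre0] at this
      obtain ⟨lp, hlplt, hlpmem⟩ := (((hTbase.mono_left hsub1).eventually_lt_const
        (show (ip x y₀).re < (ip x y₀).re + ε/2 by linarith)).and
        self_mem_nhdsWithin).exists
      obtain ⟨lm, hlmgt, hlmmem⟩ := (((hTbase.mono_left hsub2).eventually_const_lt
        (show (ip x y₀).re - ε/2 < (ip x y₀).re by linarith)).and
        self_mem_nhdsWithin).exists
      have hlp : (0:ℝ) < lp := hlpmem
      have hlm : lm < (0:ℝ) := hlmmem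
      have hFc : ∀ lam : ℝ, Continuous
          (fun y' : V => nrm y' * ((nrm (y' + (lam:ℂ) • x) - nrm y') / lam)) := by
        intro lam
        have h2 : Continuous fun y' : V => nrm (y' + (lam:ℂ) • x) :=
          hcn.comp (continuous_id.add continuous_const)
        exact hcn.mul ((h2.sub hcn).div_const lam)
      have hev1 : ∀ᶠ y' in 𝓝 y₀,
          nrm y' * ((nrm (y' + (lp:ℂ) • x) - nrm y') / lp) < (ip x y₀).re + ε/2 :=
        ((hFc lp).continuousAt).eventually_lt_const hlplt
      have hev2 : ∀ᶠ y' in 𝓝 y₀,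
          (ip x y₀).re - ε/2 < nrm y' * ((nrm (y' + (lm:ℂ) • x) - nrm y') / lm) :=
        ((hFc lm).continuousAt).eventually_const_lt hlmgt
      filter_upwards [hev1, hev2] with y' h1 h2
      have hb1 : (ip x y').re ≤ nrm y' * ((nrm (y' + (lp:ℂ) • x) - nrm y') / lp) := by
        have hk : lp * (ip x y').re ≤ nrm y' * (nrm (y' + (lp:ℂ) • x) - nrm y') :=
          S.key_ineq x y' lp
        rw [← mul_div_assoc, le_div_iff₀ hlp]
        linarith
      have hb2 : nrm y' * ((nrm (y' + (lm:ℂ) • x) - nrm y') / lm) ≤ (ip x y').re := by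
        have hk : lm * (ip x y').re ≤ nrm y' * (nrm (y' + (lm:ℂ) • x) - nrm y') :=
          S.key_ineq x y' lm
        rw [← mul_div_assoc, div_le_iff_of_neg hlm]
        linarith
      rw [Real.dist_eq, abs_sub_lt_iff]
      constructor
      · linarith
      · linarith
    -- continuity of D x at nonzero points
    have hDcont : ∀ (x y₀ : V), y₀ ≠ 0 → ContinuousAt (D x) y₀ := by
      intro x y₀ hy₀
      have hevne : ∀ᶠ y' in 𝓝 y₀, y' ≠ 0 := by
        filter_upwards [isOpen_compl_singleton.mem_nhds
          (show y₀ ∈ ({0}ᶜ : Set V) from hy₀)] with w hw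
        exact hw
      have hc : ContinuousAt (fun y' => (ip x y').re / nrm y') y₀ :=
        (hRcont x y₀ hy₀).div hcn.continuousAt (hgpos y₀ hy₀).ne'
      refine hc.congr ?_
      filter_upwards [hevne] with y' hne
      rw [hre x y' hne, mul_div_cancel_left₀ _ (hgpos y' hne).ne']
    constructor
    · -- sD continuous → D2 continuous
      intro Hs x z y hy
      rw [hiff]
      have hevne : ∀ᶠ y' in 𝓝 y, y' ≠ 0 := by
        filter_upwards [isOpen_compl_singleton.mem_nhds
          (show y ∈ ({0}ᶜ : Set V) from hy)] with w hw
        exact hw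
      have hsC : ContinuousAt (sD x z) y := (hiff _ _).1 (Hs x z y hy)
      have hc : ContinuousAt
          (fun y' => (sD x z y' - D x y' * D z y') / nrm y') y :=
        (hsC.sub ((hDcont x y hy).mul (hDcont z y hy))).div hcn.continuousAt
          (hgpos y hy).ne'
      refine hc.congr ?_
      filter_upwards [hevne] with y' hne
      rw [hform x z y' hne, add_sub_cancel_right, mul_div_cancel_left₀ _ (hgpos y' hne).ne']
    · -- D2 continuous → sD continuous
      intro Hs x z y hy
      rw [hiff]
      have hevne : ∀ᶠ y' in 𝓝 y, y' ≠ 0 := by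
        filter_upwards [isOpen_compl_singleton.mem_nhds
          (show y ∈ ({0}ᶜ : Set V) from hy)] with w hw
        exact hw
      have hsC : ContinuousAt (D2 x z) y := (hiff _ _).1 (Hs x z y hy)
      have hc : ContinuousAt
          (fun y' => nrm y' * D2 x z y' + D x y' * D z y') y :=
        (hcn.continuousAt.mul hsC).add ((hDcont x y hy).mul (hDcont z y hy))
      refine hc.congr ?_
      filter_upwards [hevne] with y' hne
      exact (hform x z y' hne).symm
end

section
/- Let V be a complex vector space with an s.i.p. [·,·] whose associated norm ‖x‖ = √([x,x]) is twice Gâteaux differentiable. Then for all x, z ∈ V and all y ≠ 0 the limit [x,·]'_z(y) := lim_{λ→0, λ real} (Re[x, y+λz] − Re[x, y])/λ exists and equals ‖y‖ · ‖·‖''_{x,z}(y) + Re[x,y] · Re[z,y] / ‖y‖². -/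
open Topology Filter

/-- If the norm of a complex s.i.p. space is twice Gâteaux differentiable, with first
derivative `D x y = ‖·‖'_x(y)` and second derivative `D2 x z y = ‖·‖''_{x,z}(y)`, then for
all `x, z` and `y ≠ 0` the s.i.p. derivative `[x,·]'_z(y)` exists and equals
`‖y‖·‖·‖''_{x,z}(y) + Re[x,y]·Re[z,y]/‖y‖²`. -/
theorem stmt_1 {V : Type*} [AddCommGroup V] [Module ℂ V] (ip : V → V → ℂ)
    (nrm : V → ℝ) (hnrm : ∀ x, nrm x = Real.sqrt (ip x x).re)
    (h_add : ∀ x y z : V, ip (x + y) z = ip x z + ip y z)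
    (h_sm1 : ∀ (c : ℂ) (x y : V), ip (c • x) y = c * ip x y)
    (h_pos : ∀ x : V, x ≠ 0 → 0 < (ip x x).re ∧ (ip x x).im = 0)
    (h_cs : ∀ x y : V, ‖ip x y‖ ^ 2 ≤ (ip x x).re * (ip y y).re)
    (h_sm2 : ∀ (c : ℂ) (x y : V), ip x (c • y) = (starRingEnd ℂ) c * ip x y)
    (D : V → V → ℝ) (D2 : V → V → V → ℝ)
    (hD : ∀ x y : V, y ≠ 0 →
      Tendsto (fun lam : ℝ => (nrm (y + (lam : ℂ) • x) - nrm y) / lam)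
        (𝓝[≠] 0) (𝓝 (D x y)))
    (hD2 : ∀ x z y : V, y ≠ 0 →
      Tendsto (fun lam : ℝ => (D x (y + (lam : ℂ) • z) - D x y) / lam)
        (𝓝[≠] 0) (𝓝 (D2 x z y))) :
    ∀ x z y : V, y ≠ 0 →
      Tendsto (fun lam : ℝ =>
          ((ip x (y + (lam : ℂ) • z)).re - (ip x y).re) / lam) (𝓝[≠] 0)
        (𝓝 (nrm y * D2 x z y + (ip x y).re * (ip z y).re / nrm y ^ 2)) := by
  -- basic facts
  have hzero : ∀ y : V, ip 0 y = 0 := by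
    intro y
    have := h_sm1 0 0 y
    simpa using this
  have hre_nonneg : ∀ w : V, 0 ≤ (ip w w).re := by
    intro w
    by_cases hw : w = 0
    · simp [hw, hzero]
    · exact (h_pos w hw).1.le
  have hnrm_nonneg : ∀ w : V, 0 ≤ nrm w := by
    intro w; rw [hnrm]; exact Real.sqrt_nonneg _
  have hnrm_sq : ∀ w : V, nrm w * nrm w = (ip w w).re := by
    intro w; rw [hnrm]; exact Real.mul_self_sqrt (hre_nonneg w)
  have hnrm_pos : ∀ w : V, w ≠ 0 → 0 < nrm w := by
    intro w hw; rw [hnrm]; exact Real.sqrt_pos.mpr (h_pos w hw).1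
  have hnrm_zero : ∀ w : V, nrm w = 0 → w = 0 := by
    intro w hw
    by_contra h
    exact absurd hw (ne_of_gt (hnrm_pos w h))
  -- Cauchy-Schwarz, real part form
  have hCS : ∀ w y : V, (ip w y).re ≤ nrm w * nrm y := by
    intro w y
    have h1 : (ip w y).re ≤ ‖ip w y‖ := Complex.re_le_norm _
    have h2 : ‖ip w y‖ ≤ nrm w * nrm y := by
      have hn : nrm w * nrm y = Real.sqrt ((ip w w).re * (ip y y).re) := by
        rw [hnrm, hnrm, Real.sqrt_mul (hre_nonneg w)]
      rw [hn]
      calc ‖ip w y‖ = Real.sqrt (‖ip w y‖ ^ 2) := by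
            rw [Real.sqrt_sq (norm_nonneg _)]
        _ ≤ _ := Real.sqrt_le_sqrt (h_cs w y)
    linarith
  -- expansion of the first argument
  have hexp : ∀ (x y : V) (lam : ℝ), (ip (y + (lam : ℂ) • x) y).re
      = (ip y y).re + lam * (ip x y).re := by
    intro x y lam
    rw [h_add, h_sm1]
    simp [Complex.add_re, Complex.mul_re]
  -- the key identity : D x y = Re[x,y]/‖y‖
  have hkey : ∀ x y : V, y ≠ 0 → D x y = (ip x y).re / nrm y := by
    intro x y hy
    have hny := hnrm_pos y hy
    set c : ℝ := (ip x y).re / nrm y with hc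
    have hineq : ∀ lam : ℝ, nrm y + lam * c ≤ nrm (y + (lam : ℂ) • x) := by
      intro lam
      have h1 : (ip y y).re + lam * (ip x y).re ≤ nrm (y + (lam : ℂ) • x) * nrm y := by
        rw [← hexp x y lam]; exact hCS _ _
      have hc' : c * nrm y = (ip x y).re := div_mul_cancel₀ _ hny.ne'
      have h2 : (nrm y + lam * c) * nrm y = (ip y y).re + lam * (ip x y).re := by
        linear_combination hnrm_sq y + lam * hc'
      have := h2 ▸ h1
      exact le_of_mul_le_mul_right this hny
    -- limits from the right and left
    have hmonoR : (𝓝[Set.Ioi (0:ℝ)] 0) ≤ (𝓝[≠] (0:ℝ)) :=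
      nhdsWithin_mono _ (fun a ha => ne_of_gt ha)
    have hmonoL : (𝓝[Set.Iio (0:ℝ)] 0) ≤ (𝓝[≠] (0:ℝ)) :=
      nhdsWithin_mono _ (fun a ha => ne_of_lt ha)
    have hge : c ≤ D x y := by
      refine ge_of_tendsto ((hD x y hy).mono_left hmonoR) ?_
      filter_upwards [self_mem_nhdsWithin] with lam (hlam : 0 < lam)
      rw [le_div_iff₀ hlam]
      have := hineq lam
      linarith [this]
    have hle : D x y ≤ c := by
      refine le_of_tendsto ((hD x y hy).mono_left hmonoL) ?_
      filter_upwards [self_mem_nhdsWithin] with lam (hlam : lam < 0)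
      rw [div_le_iff_of_neg hlam]
      have := hineq lam
      linarith [this]
    exact le_antisymm hle hge
  -- main part
  intro x z y hy
  have hny := hnrm_pos y hy
  -- continuity of the norm along the line
  have hN : Tendsto (fun lam : ℝ => nrm (y + (lam : ℂ) • z)) (𝓝[≠] 0) (𝓝 (nrm y)) := by
    have h1 : Tendsto (fun lam : ℝ =>
        ((nrm (y + (lam : ℂ) • z) - nrm y) / lam) * lam) (𝓝[≠] 0) (𝓝 (D z y * 0)) :=
      (hD z y hy).mul (tendsto_nhdsWithin_of_tendsto_nhds tendsto_id)
    rw [mul_zero] at h1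
    have h2 : Tendsto (fun lam : ℝ => nrm (y + (lam : ℂ) • z) - nrm y) (𝓝[≠] 0) (𝓝 0) := by
      refine h1.congr' ?_
      filter_upwards [self_mem_nhdsWithin] with lam (hlam : lam ≠ 0)
      field_simp
    have := h2.add (tendsto_const_nhds (x := nrm y))
    simpa using this
  -- eventually y + lam z ≠ 0
  have hnz : ∀ᶠ lam : ℝ in (𝓝[≠] (0:ℝ)), y + (lam : ℂ) • z ≠ 0 := by
    have hev : ∀ᶠ lam : ℝ in (𝓝[≠] (0:ℝ)), 0 < nrm (y + (lam : ℂ) • z) :=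
      hN.eventually (eventually_gt_nhds hny)
    filter_upwards [hev] with lam hlam
    intro h0
    rw [h0] at hlam
    have : nrm (0 : V) = 0 := by
      rw [hnrm]
      have : ip (0:V) 0 = 0 := hzero 0
      simp [this]
    linarith [hlam, this.symm ▸ hlam]
  -- the limit of the decomposed expression
  have hmain : Tendsto (fun lam : ℝ =>
      nrm (y + (lam : ℂ) • z) * ((D x (y + (lam : ℂ) • z) - D x y) / lam)
        + D x y * ((nrm (y + (lam : ℂ) • z) - nrm y) / lam)) (𝓝[≠] 0)
      (𝓝 (nrm y * D2 x z y + D x y * D z y)) :=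
    (hN.mul (hD2 x z y hy)).add (tendsto_const_nhds.mul (hD z y hy))
  have hval : nrm y * D2 x z y + D x y * D z y
      = nrm y * D2 x z y + (ip x y).re * (ip z y).re / nrm y ^ 2 := by
    rw [hkey x y hy, hkey z y hy]
    field_simp
  rw [hval] at hmain
  refine hmain.congr' ?_
  filter_upwards [hnz, self_mem_nhdsWithin] with lam hlamnz (hlam : lam ≠ 0)
  have hn1 : nrm (y + (lam : ℂ) • z) ≠ 0 := (hnrm_pos _ hlamnz).ne'
  have hn2 : nrm y ≠ 0 := hny.ne'
  have h1 : (ip x (y + (lam : ℂ) • z)).re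
      = nrm (y + (lam : ℂ) • z) * D x (y + (lam : ℂ) • z) := by
    rw [hkey x _ hlamnz]
    rw [mul_div_cancel₀ _ hn1]
  have h2 : (ip x y).re = nrm y * D x y := by
    rw [hkey x y hy]
    rw [mul_div_cancel₀ _ hn2]
  rw [h1, h2]
  field_simp
  ring
end

section
/- Let (S, [·,·]_S) be a complex vector space with an s.i.p., and let T be a complex vector space with a map [·,·]_T : T × T → ℂ such that −[·,·]_T is an s.i.p. on T. Define [(s₁,t₁),(s₂,t₂)]⁻ := [s₁,s₂]_S − [t₁,t₂]_T on the product space S × T. Then [·,·]⁻ is an s.i.p. on S × T; in particular, it is additive and homogeneous in the first argument, conjugate-homogeneous in the second argument, satisfies [(s,t),(s,t)]⁻ > 0 for (s,t) ≠ (0,0), and satisfies the Cauchy–Schwarz inequality |[(s₁,t₁),(s₂,t₂)]⁻|² ≤ [(s₁,t₁),(s₁,t₁)]⁻ · [(s₂,t₂),(s₂,t₂)]⁻. -/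
/-- If `(S, ipS)` is a complex s.i.p. space and `-ipT` is an s.i.p. on `T`, then
`[(s₁,t₁),(s₂,t₂)]⁻ := ipS s₁ s₂ - ipT t₁ t₂` is an s.i.p. on `S × T`: it is additive and
homogeneous in the first argument, conjugate-homogeneous in the second, positive on
nonzero vectors, and satisfies the Cauchy–Schwarz inequality. -/
theorem stmt_2 {S T : Type*} [AddCommGroup S] [Module ℂ S] [AddCommGroup T] [Module ℂ T]
    (ipS : S → S → ℂ) (ipT : T → T → ℂ)
    (hS_add : ∀ x y z : S, ipS (x + y) z = ipS x z + ipS y z)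
    (hS_sm1 : ∀ (c : ℂ) (x y : S), ipS (c • x) y = c * ipS x y)
    (hS_pos : ∀ x : S, x ≠ 0 → 0 < (ipS x x).re ∧ (ipS x x).im = 0)
    (hS_cs : ∀ x y : S, ‖ipS x y‖ ^ 2 ≤ (ipS x x).re * (ipS y y).re)
    (hS_sm2 : ∀ (c : ℂ) (x y : S), ipS x (c • y) = (starRingEnd ℂ) c * ipS x y)
    (hT_add : ∀ x y z : T, -ipT (x + y) z = -ipT x z + -ipT y z)
    (hT_sm1 : ∀ (c : ℂ) (x y : T), -ipT (c • x) y = c * -ipT x y)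
    (hT_pos : ∀ x : T, x ≠ 0 → 0 < (-ipT x x).re ∧ (-ipT x x).im = 0)
    (hT_cs : ∀ x y : T, ‖-ipT x y‖ ^ 2 ≤ (-ipT x x).re * (-ipT y y).re)
    (hT_sm2 : ∀ (c : ℂ) (x y : T), -ipT x (c • y) = (starRingEnd ℂ) c * -ipT x y)
    (ipm : S × T → S × T → ℂ)
    (hipm : ∀ p q : S × T, ipm p q = ipS p.1 q.1 - ipT p.2 q.2) :
    (∀ x y z : S × T, ipm (x + y) z = ipm x z + ipm y z) ∧
    (∀ (c : ℂ) (x y : S × T), ipm (c • x) y = c * ipm x y) ∧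
    (∀ (c : ℂ) (x y : S × T), ipm x (c • y) = (starRingEnd ℂ) c * ipm x y) ∧
    (∀ x : S × T, x ≠ 0 → 0 < (ipm x x).re ∧ (ipm x x).im = 0) ∧
    (∀ x y : S × T, ‖ipm x y‖ ^ 2 ≤ (ipm x x).re * (ipm y y).re) := by
  have hS0 : ∀ z : S, ipS 0 z = 0 := by
    intro z
    have h := hS_add 0 0 z
    rw [add_zero] at h
    linear_combination -h
  have hT0 : ∀ z : T, ipT 0 z = 0 := by
    intro z
    have h := hT_add 0 0 z
    rw [add_zero] at h
    linear_combination h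
  have hSnn : ∀ x : S, 0 ≤ (ipS x x).re := by
    intro x
    by_cases hx : x = 0
    · simp [hx, hS0]
    · exact (hS_pos x hx).1.le
  have hTnn : ∀ x : T, 0 ≤ (-ipT x x).re := by
    intro x
    by_cases hx : x = 0
    · simp [hx, hT0]
    · exact (hT_pos x hx).1.le
  refine ⟨?_, ?_, ?_, ?_, ?_⟩
  · intro x y z
    simp only [hipm, Prod.fst_add, Prod.snd_add, hS_add]
    have hT' : ipT (x.2 + y.2) z.2 = ipT x.2 z.2 + ipT y.2 z.2 := by
      have := hT_add x.2 y.2 z.2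
      linear_combination -this
    rw [hT']; ring
  · intro c x y
    simp only [hipm, Prod.smul_fst, Prod.smul_snd, hS_sm1]
    have hT' : ipT (c • x.2) y.2 = c * ipT x.2 y.2 := by
      have := hT_sm1 c x.2 y.2
      linear_combination -this
    rw [hT']; ring
  · intro c x y
    simp only [hipm, Prod.smul_fst, Prod.smul_snd, hS_sm2]
    have hT' : ipT x.2 (c • y.2) = (starRingEnd ℂ) c * ipT x.2 y.2 := by
      have := hT_sm2 c x.2 y.2
      linear_combination -this
    rw [hT']; ring
  · intro x hx
    have him : (ipS x.1 x.1).im = 0 := by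
      by_cases h1 : x.1 = 0
      · simp [h1, hS0]
      · exact (hS_pos x.1 h1).2
    have himT : (-ipT x.2 x.2).im = 0 := by
      by_cases h2 : x.2 = 0
      · simp [h2, hT0]
      · exact (hT_pos x.2 h2).2
    have hre : (ipm x x).re = (ipS x.1 x.1).re + (-ipT x.2 x.2).re := by
      rw [hipm]; simp [Complex.sub_re]; ring
    have him' : (ipm x x).im = (ipS x.1 x.1).im + (-ipT x.2 x.2).im := by
      rw [hipm]; simp [Complex.sub_im]; ring
    constructor
    · rw [hre]
      rcases Prod.mk.injEq x.1 x.2 0 0 ▸ (fun h => hx (Prod.ext h.1 h.2) : ¬(x.1 = 0 ∧ x.2 = 0)) with h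
      by_cases h1 : x.1 = 0
      · have h2 : x.2 ≠ 0 := fun h2 => hx (Prod.ext h1 h2)
        have := (hT_pos x.2 h2).1
        linarith [hSnn x.1]
      · have := (hS_pos x.1 h1).1
        linarith [hTnn x.2]
    · rw [him', him, himT]; ring
  · intro x y
    set a := ‖ipS x.1 y.1‖ with ha
    set b := ‖-ipT x.2 y.2‖ with hb
    set A := (ipS x.1 x.1).re
    set B := (-ipT x.2 x.2).re
    set C := (ipS y.1 y.1).re
    set D := (-ipT y.2 y.2).re
    have habs : ‖ipm x y‖ ≤ a + b := by
      rw [hipm, sub_eq_add_neg]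
      exact (norm_add_le _ _)
    have h1 : a ^ 2 ≤ A * C := hS_cs x.1 y.1
    have h2 : b ^ 2 ≤ B * D := hT_cs x.2 y.2
    have ha0 : 0 ≤ a := norm_nonneg _
    have hb0 : 0 ≤ b := norm_nonneg _
    have hA : 0 ≤ A := hSnn x.1
    have hB : 0 ≤ B := hTnn x.2
    have hC : 0 ≤ C := hSnn y.1
    have hD : 0 ≤ D := hTnn y.2
    have hre1 : (ipm x x).re = A + B := by
      have hBr : B = -(ipT x.2 x.2).re := Complex.neg_re _
      rw [hipm, Complex.sub_re, hBr]; ring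
    have hre2 : (ipm y y).re = C + D := by
      have hDr : D = -(ipT y.2 y.2).re := Complex.neg_re _
      rw [hipm, Complex.sub_re, hDr]; ring
    rw [hre1, hre2]
    have habs2 : ‖ipm x y‖ ^ 2 ≤ (a + b) ^ 2 := by
      apply pow_le_pow_left₀ (norm_nonneg _) habs 2
    refine habs2.trans ?_
    have key : 2 * (a * b) ≤ A * D + B * C := by
      have hab2 : (a * b) ^ 2 ≤ (A * C) * (B * D) := by
        calc (a * b) ^ 2 = a ^ 2 * b ^ 2 := by ring
        _ ≤ (A * C) * (B * D) := by
            apply mul_le_mul h1 h2 (sq_nonneg b) (mul_nonneg hA hC)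
      have ht0 : 0 ≤ A * D + B * C :=
        add_nonneg (mul_nonneg hA hD) (mul_nonneg hB hC)
      have hs0 : 0 ≤ 2 * (a * b) := by positivity
      have sle : (2 * (a * b)) ^ 2 ≤ (A * D + B * C) ^ 2 := by
        nlinarith [hab2, sq_nonneg (A * D - B * C)]
      nlinarith [sle, hs0, ht0]
    nlinarith [key, h1, h2]
end

section
/- Let G : ℝⁿ → ℝ be a C² function with G(λx) = λ²G(x) for all real λ and all x ∈ ℝⁿ, and let W ⊆ ℝⁿ be a linear subspace such that G(w) > 0 for all nonzero w ∈ W and such that the function w ↦ √(G(w)) is convex on W. Then for all x, y ∈ W with y ≠ 0 the associated product [x,y] := (1/2)·(Hessian of G at y applied to the pair (x, y)) satisfies the Cauchy–Schwarz inequality |[x,y]| ≤ √(G(x)·G(y)). -/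
open Filter Topology

/-- If `f` has derivative `d` at `0` and `f t ≤ f 0 + |t| * M` for all `t`, then `|d| ≤ M`. -/
lemma abs_deriv_le_of_bound {f : ℝ → ℝ} {d M : ℝ} (hf : HasDerivAt f d 0)
    (hbd : ∀ t, f t ≤ f 0 + |t| * M) : |d| ≤ M := by
  have hslope := hasDerivAt_iff_tendsto_slope.1 hf
  rw [abs_le]
  constructor
  · have h1 : Tendsto (slope f 0) (𝓝[<] 0) (𝓝 d) :=
      hslope.mono_left (nhdsWithin_mono _ (fun t ht => ne_of_lt ht))
    refine ge_of_tendsto h1 ?_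
    filter_upwards [self_mem_nhdsWithin] with t ht
    have ht' : (t : ℝ) < 0 := ht
    rw [slope_def_field, sub_zero, le_div_iff_of_neg ht']
    have := hbd t
    rw [abs_of_neg ht'] at this
    nlinarith
  · have h1 : Tendsto (slope f 0) (𝓝[>] 0) (𝓝 d) :=
      hslope.mono_left (nhdsWithin_mono _ (fun t ht => ne_of_gt ht))
    refine le_of_tendsto h1 ?_
    filter_upwards [self_mem_nhdsWithin] with t ht
    have ht' : (0 : ℝ) < t := ht
    rw [slope_def_field, sub_zero, div_le_iff₀ ht']
    have := hbd t
    rw [abs_of_pos ht'] at this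
    nlinarith

/-- Let `G : ℝⁿ → ℝ` be `C²` with `G(λx) = λ²G(x)`, and `W` a subspace on which `G` is
positive away from `0` and `√G` is convex. Then the associated product
`[x,y] = (1/2)·xᵀ(D²G|_y)y` satisfies Cauchy–Schwarz on `W`:
`|[x,y]| ≤ √(G(x)·G(y))` for all `x, y ∈ W` with `y ≠ 0`. -/
theorem stmt_3 {n : ℕ} (G : (Fin n → ℝ) → ℝ)
    (hG : ContDiff ℝ 2 G)
    (hhom : ∀ (c : ℝ) (x : Fin n → ℝ), G (c • x) = c ^ 2 * G x)
    (W : Submodule ℝ (Fin n → ℝ))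
    (hpos : ∀ w ∈ W, w ≠ 0 → 0 < G w)
    (hconv : ConvexOn ℝ (W : Set (Fin n → ℝ)) fun w => Real.sqrt (G w)) :
    ∀ x ∈ W, ∀ y ∈ W, y ≠ 0 →
      |(1 / 2 : ℝ) * fderiv ℝ (fderiv ℝ G) y x y| ≤ Real.sqrt (G x * G y) := by
  have hdiff : Differentiable ℝ G := hG.differentiable (by norm_num)
  have hdG : ContDiff ℝ 1 (fderiv ℝ G) := hG.fderiv_right (by norm_num)
  have hdGdiff : Differentiable ℝ (fderiv ℝ G) := hdG.differentiable (by norm_num)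
  -- homogeneity of the first derivative
  have hfdhom : ∀ (c : ℝ), c ≠ 0 → ∀ z, fderiv ℝ G (c • z) = c • fderiv ℝ G z := by
    intro c hc z
    have hA : HasFDerivAt (fun x => G (c • x)) (c • fderiv ℝ G (c • z)) z := by
      have hsm : HasFDerivAt (fun x : Fin n → ℝ => c • x)
          (c • ContinuousLinearMap.id ℝ (Fin n → ℝ)) z := (hasFDerivAt_id z).const_smul c
      have := (hdiff (c • z)).hasFDerivAt.comp z hsm
      refine this.congr_fderiv ?_
      ext v
      simp [map_smul]
    have hB : HasFDerivAt (fun x => G (c • x)) (c ^ 2 • fderiv ℝ G z) z := by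
      have : HasFDerivAt (fun x => c ^ 2 * G x) (c ^ 2 • fderiv ℝ G z) z :=
        (hdiff z).hasFDerivAt.const_smul (c ^ 2)
      convert this using 1
      funext x
      exact hhom c x
    have h := hA.unique hB
    have : fderiv ℝ G (c • z) = c⁻¹ • (c ^ 2 • fderiv ℝ G z) := by
      rw [← h, smul_smul, inv_mul_cancel₀ hc, one_smul]
    rw [this, smul_smul]
    congr 1
    field_simp
  intro x hx y hy hy0
  have hGy : 0 < G y := hpos y hy hy0
  -- Euler identity for second derivative
  have hdd : HasFDerivAt (fderiv ℝ G) (fderiv ℝ (fderiv ℝ G) y) y := (hdGdiff y).hasFDerivAt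
  have heuler : fderiv ℝ (fderiv ℝ G) y y = fderiv ℝ G y := by
    have hline : HasDerivAt (fun c : ℝ => c • y) y 1 := by
      simpa using (hasDerivAt_id (1 : ℝ)).smul_const y
    have h1 : HasDerivAt (fun c : ℝ => fderiv ℝ G (c • y)) (fderiv ℝ (fderiv ℝ G) y y) 1 := by
      have : HasFDerivAt (fderiv ℝ G) (fderiv ℝ (fderiv ℝ G) y) ((fun c : ℝ => c • y) 1) := by
        simpa using hdd
      exact this.comp_hasDerivAt 1 hline
    have h2 : HasDerivAt (fun c : ℝ => c • fderiv ℝ G y) (fderiv ℝ G y) 1 := by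
      simpa using (hasDerivAt_id (1 : ℝ)).smul_const (fderiv ℝ G y)
    have heq : (fun c : ℝ => fderiv ℝ G (c • y)) =ᶠ[𝓝 (1 : ℝ)] fun c : ℝ => c • fderiv ℝ G y := by
      filter_upwards [isOpen_ne.mem_nhds (by norm_num : (1 : ℝ) ≠ 0)] with c hc
      exact hfdhom c hc y
    exact (h1.congr_of_eventuallyEq heq.symm).unique h2
  -- symmetry of the second derivative
  have hsymm : fderiv ℝ (fderiv ℝ G) y x y = fderiv ℝ (fderiv ℝ G) y y x :=
    second_derivative_symmetric (fun z => (hdiff z).hasFDerivAt) hdd x y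
  -- nonnegativity of G on W
  have hG0 : G 0 = 0 := by simpa using hhom 0 0
  have hGnn : ∀ w ∈ W, 0 ≤ G w := by
    intro w hw
    rcases eq_or_ne w 0 with rfl | h
    · simp [hG0]
    · exact (hpos w hw h).le
  -- subadditivity bound
  have hsub : ∀ t : ℝ, Real.sqrt (G (y + t • x)) ≤ Real.sqrt (G y) + |t| * Real.sqrt (G x) := by
    intro t
    have hmid : y + t • x = (2 : ℝ) • ((1 / 2 : ℝ) • y + (1 / 2 : ℝ) • (t • x)) := by
      module
    have h1 : Real.sqrt (G (y + t • x)) =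
        2 * Real.sqrt (G ((1 / 2 : ℝ) • y + (1 / 2 : ℝ) • (t • x))) := by
      rw [hmid, hhom]
      rw [Real.sqrt_mul (by positivity : (0:ℝ) ≤ (2:ℝ)^2), Real.sqrt_sq (by norm_num : (0:ℝ) ≤ 2)]
    have h2 := hconv.2 hy (W.smul_mem t hx) (by norm_num : (0:ℝ) ≤ 1/2)
      (by norm_num : (0:ℝ) ≤ 1/2) (by norm_num)
    simp only [smul_eq_mul] at h2
    have h3 : Real.sqrt (G (t • x)) = |t| * Real.sqrt (G x) := by
      rw [hhom, Real.sqrt_mul (sq_nonneg t), Real.sqrt_sq_eq_abs]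
    rw [h1]
    calc 2 * Real.sqrt (G ((1 / 2 : ℝ) • y + (1 / 2 : ℝ) • (t • x)))
        ≤ 2 * (1/2 * Real.sqrt (G y) + 1/2 * Real.sqrt (G (t • x))) := by linarith
      _ = Real.sqrt (G y) + |t| * Real.sqrt (G x) := by rw [h3]; ring
  -- derivative of t ↦ √(G (y + t x)) at 0
  have hline0 : HasDerivAt (fun t : ℝ => y + t • x) x 0 := by
    simpa using ((hasDerivAt_id (0 : ℝ)).smul_const x).const_add y
  have hg : HasDerivAt (fun t : ℝ => G (y + t • x)) (fderiv ℝ G y x) 0 := by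
    have : HasFDerivAt G (fderiv ℝ G y) ((fun t : ℝ => y + t • x) 0) := by
      simpa using (hdiff y).hasFDerivAt
    exact this.comp_hasDerivAt 0 hline0
  have hgy : (fun t : ℝ => y + t • x) 0 = y := by simp
  have hf : HasDerivAt (fun t : ℝ => Real.sqrt (G (y + t • x)))
      (1 / (2 * Real.sqrt (G y)) * fderiv ℝ G y x) 0 := by
    have hs : HasDerivAt Real.sqrt (1 / (2 * Real.sqrt (G y))) ((fun t : ℝ => G (y + t • x)) 0) := by
      simpa using Real.hasDerivAt_sqrt (ne_of_gt hGy)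
    exact hs.comp 0 hg
  have hf0 : (fun t : ℝ => Real.sqrt (G (y + t • x))) 0 = Real.sqrt (G y) := by simp
  have hbd : ∀ t : ℝ, Real.sqrt (G (y + t • x)) ≤
      (fun t : ℝ => Real.sqrt (G (y + t • x))) 0 + |t| * Real.sqrt (G x) := by
    intro t; rw [hf0]; exact hsub t
  have habs : |1 / (2 * Real.sqrt (G y)) * fderiv ℝ G y x| ≤ Real.sqrt (G x) :=
    abs_deriv_le_of_bound hf hbd
  -- conclude
  have hsqy : 0 < Real.sqrt (G y) := Real.sqrt_pos.2 hGy
  rw [hsymm, heuler] at *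
  rw [Real.sqrt_mul (hGnn x hx)]
  have : |(1 / 2 : ℝ) * fderiv ℝ G y x| = Real.sqrt (G y) * |1 / (2 * Real.sqrt (G y)) * fderiv ℝ G y x| := by
    rw [abs_mul, abs_mul, ← mul_assoc]
    congr 1
    rw [abs_of_pos (by positivity : (0:ℝ) < 1 / (2 * Real.sqrt (G y))),
      abs_of_nonneg (by norm_num : (0:ℝ) ≤ 1/2)]
    field_simp
  rw [this]
  calc Real.sqrt (G y) * |1 / (2 * Real.sqrt (G y)) * fderiv ℝ G y x|
      ≤ Real.sqrt (G y) * Real.sqrt (G x) := by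
        exact mul_le_mul_of_nonneg_left habs hsqy.le
    _ = Real.sqrt (G x) * Real.sqrt (G y) := mul_comm _ _
end

section
/- Let S be a real vector space with a real s.i.p. [·,·]_S, and let T be a real vector space with a map [·,·]_T : T × T → ℝ such that −[·,·]_T is a real s.i.p. on T. On V = S × T define the Minkowski product [(s₁,t₁),(s₂,t₂)]⁺ := [s₁,s₂]_S + [t₁,t₂]_T and the s.i.p. [(s₁,t₁),(s₂,t₂)]⁻ := [s₁,s₂]_S − [t₁,t₂]_T. If {e₁,…,e_k} is a basis of S with the Auerbach property for [·,·]_S and {e_{k+1},…,e_n} is a basis of T with the Auerbach property for [·,·]_T, then the union {e₁,…,e_n} is a basis of V having the Auerbach property with respect to both [·,·]⁺ and [·,·]⁻. -/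
/-- Given a real s.i.p. space `(S, ipS)` and a space `T` with `-ipT` a real s.i.p., if
`bS` is an Auerbach basis of `S` for `ipS` and `bT` is an Auerbach basis of `T` for
`ipT`, then the union family `e` in `V = S × T` is a basis of `V` having the Auerbach
property with respect to both the Minkowski product `[·,·]⁺` and the s.i.p. `[·,·]⁻`. -/
theorem stmt_7 {S T : Type*} [AddCommGroup S] [Module ℝ S] [AddCommGroup T] [Module ℝ T]
    (ipS : S → S → ℝ) (ipT : T → T → ℝ)
    (hS_add : ∀ x y z : S, ipS (x + y) z = ipS x z + ipS y z)
    (hS_sm1 : ∀ (c : ℝ) (x y : S), ipS (c • x) y = c * ipS x y)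
    (hS_sm2 : ∀ (c : ℝ) (x y : S), ipS x (c • y) = c * ipS x y)
    (hS_pos : ∀ x : S, x ≠ 0 → 0 < ipS x x)
    (hS_cs : ∀ x y : S, ipS x y ^ 2 ≤ ipS x x * ipS y y)
    (hT_add : ∀ x y z : T, -ipT (x + y) z = -ipT x z + -ipT y z)
    (hT_sm1 : ∀ (c : ℝ) (x y : T), -ipT (c • x) y = c * -ipT x y)
    (hT_sm2 : ∀ (c : ℝ) (x y : T), -ipT x (c • y) = c * -ipT x y)
    (hT_pos : ∀ x : T, x ≠ 0 → 0 < -ipT x x)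
    (hT_cs : ∀ x y : T, (-ipT x y) ^ 2 ≤ -ipT x x * -ipT y y)
    {k m : ℕ} (bS : Module.Basis (Fin k) ℝ S) (bT : Module.Basis (Fin m) ℝ T)
    (hAuerS : ∀ i : Fin k, ∀ w ∈ Submodule.span ℝ (⇑bS '' {j : Fin k | j ≠ i}),
      ipS w (bS i) = 0)
    (hAuerT : ∀ i : Fin m, ∀ w ∈ Submodule.span ℝ (⇑bT '' {j : Fin m | j ≠ i}),
      ipT w (bT i) = 0)
    (e : Fin k ⊕ Fin m → S × T)
    (he1 : ∀ i : Fin k, e (Sum.inl i) = (bS i, 0))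
    (he2 : ∀ j : Fin m, e (Sum.inr j) = (0, bT j)) :
    LinearIndependent ℝ e ∧
    Submodule.span ℝ (Set.range e) = ⊤ ∧
    (∀ i : Fin k ⊕ Fin m, ∀ w ∈ Submodule.span ℝ (e '' {j | j ≠ i}),
      ipS w.1 (e i).1 + ipT w.2 (e i).2 = 0 ∧
      ipS w.1 (e i).1 - ipT w.2 (e i).2 = 0) := by

  have hipS0 : ∀ x : S, ipS x 0 = 0 := by
    intro x
    have := hS_sm2 0 x 0
    simpa using this
  have hipT0 : ∀ x : T, ipT x 0 = 0 := by
    intro x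
    have := hT_sm2 0 x 0
    have : ipT x ((0 : ℝ) • (0 : T)) = 0 := by linarith [this]
    simpa using this
  have heq : e = ⇑(bS.prod bT) := by
    funext i
    cases i with
    | inl i => simp [he1 i, Module.Basis.prod_apply]
    | inr j => simp [he2 j, Module.Basis.prod_apply]
  refine ⟨heq ▸ (bS.prod bT).linearIndependent, heq ▸ (bS.prod bT).span_eq, ?_⟩
  intro i w hw
  cases i with
  | inl i₀ =>
    have h1 : w.1 ∈ Submodule.span ℝ (⇑bS '' {j : Fin k | j ≠ i₀}) := by
      have hm : w.1 ∈ Submodule.map (LinearMap.fst ℝ S T)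
          (Submodule.span ℝ (e '' {j | j ≠ Sum.inl i₀})) :=
        ⟨w, hw, rfl⟩
      rw [Submodule.map_span] at hm
      have hsub : (LinearMap.fst ℝ S T) '' (e '' {j | j ≠ Sum.inl i₀}) ⊆
          insert (0 : S) (⇑bS '' {j : Fin k | j ≠ i₀}) := by
        rintro x ⟨v, ⟨j, hj, rfl⟩, rfl⟩
        cases j with
        | inl a =>
          right
          exact ⟨a, fun h => hj (by rw [h]), by simp [he1 a]⟩
        | inr b => left; simp [he2 b]
      have := Submodule.span_mono hsub hm
      rwa [Submodule.span_insert_zero] at this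
    have hs := hAuerS i₀ w.1 h1
    rw [he1 i₀]
    simp only [hs]
    constructor <;> simp [hipT0]
  | inr j₀ =>
    have h1 : w.2 ∈ Submodule.span ℝ (⇑bT '' {j : Fin m | j ≠ j₀}) := by
      have hm : w.2 ∈ Submodule.map (LinearMap.snd ℝ S T)
          (Submodule.span ℝ (e '' {j | j ≠ Sum.inr j₀})) :=
        ⟨w, hw, rfl⟩
      rw [Submodule.map_span] at hm
      have hsub : (LinearMap.snd ℝ S T) '' (e '' {j | j ≠ Sum.inr j₀}) ⊆
          insert (0 : T) (⇑bT '' {j : Fin m | j ≠ j₀}) := by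
        rintro x ⟨v, ⟨j, hj, rfl⟩, rfl⟩
        cases j with
        | inl a => left; simp [he1 a]
        | inr b =>
          right
          exact ⟨b, fun h => hj (by rw [h]), by simp [he2 b]⟩
      have := Submodule.span_mono hsub hm
      rwa [Submodule.span_insert_zero] at this
    have ht := hAuerT j₀ w.2 h1
    rw [he2 j₀]
    simp only [ht]
    constructor <;> simp [hipS0]
end

section
/- Let S be a real vector space with a real s.i.p. [·,·], let V = S × ℝ carry the Minkowski product [(s₁,t₁),(s₂,t₂)]⁺ := [s₁,s₂] − t₁t₂, and let v = (s,t) ∈ V satisfy [v,v]⁺ = −1. Then every nonzero vector w ∈ V that is orthogonal to v, i.e. [w,v]⁺ = 0, satisfies [w,w]⁺ > 0. In other words, the orthogonal companion v^⊥ = {w ∈ V : [w,v]⁺ = 0} is a positive subspace of V. -/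
/-- In the generalized space-time model `V = S × ℝ` with Minkowski product
`[(s₁,t₁),(s₂,t₂)]⁺ = [s₁,s₂] - t₁t₂`, if `v` lies on the imaginary unit sphere
(`[v,v]⁺ = -1`) then every nonzero `w` orthogonal to `v` satisfies `[w,w]⁺ > 0`; i.e. the
orthogonal companion of `v` is a positive subspace. -/
theorem stmt_9 {S : Type*} [AddCommGroup S] [Module ℝ S]
    (ip : S → S → ℝ)
    (h_add : ∀ x y z : S, ip (x + y) z = ip x z + ip y z)
    (h_sm1 : ∀ (c : ℝ) (x y : S), ip (c • x) y = c * ip x y)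
    (h_sm2 : ∀ (c : ℝ) (x y : S), ip x (c • y) = c * ip x y)
    (h_pos : ∀ x : S, x ≠ 0 → 0 < ip x x)
    (h_cs : ∀ x y : S, ip x y ^ 2 ≤ ip x x * ip y y)
    (v : S × ℝ) (hv : ip v.1 v.1 - v.2 ^ 2 = -1) :
    ∀ w : S × ℝ, w ≠ 0 → ip w.1 v.1 - w.2 * v.2 = 0 →
      0 < ip w.1 w.1 - w.2 ^ 2 := by
  intro w hw hortho
  by_cases ht' : w.2 = 0
  · have hs' : w.1 ≠ 0 := by
      intro h
      exact hw (Prod.ext h ht')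
    have := h_pos w.1 hs'
    rw [ht']
    nlinarith
  · have ht'2 : 0 < w.2 ^ 2 := by positivity
    by_cases hv1 : v.1 = 0
    · have h0 : ip w.1 v.1 = 0 := by
        rw [hv1]
        have := h_sm2 0 w.1 (0 : S)
        simpa using this
      have hvsq : v.2 ^ 2 = 1 := by
        rw [hv1] at hv
        have h00 : ip (0 : S) (0 : S) = 0 := by
          have := h_sm1 0 (0 : S) (0 : S)
          simpa using this
        linarith
      have hv2 : v.2 ≠ 0 := by
        intro h; rw [h] at hvsq; norm_num at hvsq
      have : w.2 * v.2 = 0 := by linarith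
      rcases mul_eq_zero.mp this with h | h
      · exact absurd h ht'
      · exact absurd h hv2
    · have hpv : 0 < ip v.1 v.1 := h_pos v.1 hv1
      have hcs := h_cs w.1 v.1
      have heq : ip w.1 v.1 = w.2 * v.2 := by linarith
      rw [heq] at hcs
      nlinarith [mul_pos ht'2 hpv]
end

section
/- Let S be a real vector space with a real s.i.p. [·,·] that is continuous in the sense that for all e, s ∈ S the map λ ↦ [e, s + λe] (λ real) is continuous at λ = 0 with limit [e,s]. Then for every s ∈ S and every e ∈ S, the function f : S → ℝ, f(s) = √(1 + [s,s]), has directional derivative f'_e(s) := lim_{λ→0} (f(s + λe) − f(s))/λ = [e,s] / √(1 + [s,s]). -/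
open Topology Filter

/-- If the real s.i.p. on `S` is continuous (for all `e, s` the map `λ ↦ [e, s + λe]`
tends to `[e,s]` as `λ → 0`), then the function `f(s) = √(1 + [s,s])` has directional
derivative `f'_e(s) = [e,s]/√(1 + [s,s])` at every `s` in every direction `e`. -/
theorem stmt_10 {S : Type*} [AddCommGroup S] [Module ℝ S]
    (ip : S → S → ℝ)
    (h_add : ∀ x y z : S, ip (x + y) z = ip x z + ip y z)
    (h_sm1 : ∀ (c : ℝ) (x y : S), ip (c • x) y = c * ip x y)
    (h_sm2 : ∀ (c : ℝ) (x y : S), ip x (c • y) = c * ip x y)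
    (h_pos : ∀ x : S, x ≠ 0 → 0 < ip x x)
    (h_cs : ∀ x y : S, ip x y ^ 2 ≤ ip x x * ip y y)
    (h_cont : ∀ e s : S,
      Tendsto (fun lam : ℝ => ip e (s + lam • e)) (𝓝 0) (𝓝 (ip e s))) :
    ∀ s e : S,
      Tendsto (fun lam : ℝ =>
          (Real.sqrt (1 + ip (s + lam • e) (s + lam • e)) - Real.sqrt (1 + ip s s)) / lam)
        (𝓝[≠] 0) (𝓝 (ip e s / Real.sqrt (1 + ip s s))) := by
  -- nonnegativity of ip x x
  have ipnn : ∀ x : S, 0 ≤ ip x x := by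
    intro x
    rcases eq_or_ne x 0 with rfl | hx
    · have h0 : ip ((0:ℝ) • (0:S)) 0 = 0 * ip 0 0 := h_sm1 0 0 0
      have h1 : ip (0:S) 0 = 0 := by simpa using h0
      exact le_of_eq h1.symm
    · exact (h_pos x hx).le
  -- extended Cauchy-Schwarz (squared)
  have key : ∀ x y : S, (ip x y + 1) ^ 2 ≤ (1 + ip x x) * (1 + ip y y) := by
    intro x y
    nlinarith [h_cs x y, ipnn x, ipnn y, sq_nonneg (ip x x - ip y y),
      sq_nonneg (ip x x + ip y y - 2 * ip x y)]
  have ecs : ∀ x y : S, ip x y + 1 ≤ Real.sqrt (1 + ip x x) * Real.sqrt (1 + ip y y) := by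
    intro x y
    have h1 : (0:ℝ) ≤ 1 + ip x x := by linarith [ipnn x]
    have h2 : (0:ℝ) ≤ 1 + ip y y := by linarith [ipnn y]
    calc ip x y + 1 ≤ |ip x y + 1| := le_abs_self _
      _ = Real.sqrt ((ip x y + 1) ^ 2) := (Real.sqrt_sq_eq_abs _).symm
      _ ≤ Real.sqrt ((1 + ip x x) * (1 + ip y y)) := Real.sqrt_le_sqrt (key x y)
      _ = Real.sqrt (1 + ip x x) * Real.sqrt (1 + ip y y) := Real.sqrt_mul h1 _
  -- ordinary CS in usable form
  have cs' : ∀ x y : S, |ip x y| ≤ Real.sqrt (ip x x) * Real.sqrt (ip y y) := by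
    intro x y
    calc |ip x y| = Real.sqrt (ip x y ^ 2) := (Real.sqrt_sq_eq_abs _).symm
      _ ≤ Real.sqrt (ip x x * ip y y) := Real.sqrt_le_sqrt (h_cs x y)
      _ = _ := Real.sqrt_mul (ipnn x) _
  intro s e
  set N0 : ℝ := Real.sqrt (1 + ip s s) with hN0def
  set C : ℝ := Real.sqrt (ip e e) with hCdef
  have hCnn : 0 ≤ C := Real.sqrt_nonneg _
  have hN0sq : N0 ^ 2 = 1 + ip s s := Real.sq_sqrt (by linarith [ipnn s])
  have hN0ge : 1 ≤ N0 := by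
    rw [hN0def]
    calc (1:ℝ) = Real.sqrt 1 := Real.sqrt_one.symm
      _ ≤ _ := Real.sqrt_le_sqrt (by linarith [ipnn s])
  have hN0pos : 0 < N0 := lt_of_lt_of_le one_pos hN0ge
  set L : ℝ := ip e s / N0 with hLdef
  -- notation for the moving point
  set N : ℝ → ℝ := fun lam => Real.sqrt (1 + ip (s + lam • e) (s + lam • e)) with hNdef
  have hNsq : ∀ lam : ℝ, N lam ^ 2 = 1 + ip (s + lam • e) (s + lam • e) := fun lam =>
    Real.sq_sqrt (by linarith [ipnn (s + lam • e)])
  have hNge : ∀ lam : ℝ, 1 ≤ N lam := by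
    intro lam
    calc (1:ℝ) = Real.sqrt 1 := Real.sqrt_one.symm
      _ ≤ _ := Real.sqrt_le_sqrt (by linarith [ipnn (s + lam • e)])
  have hNpos : ∀ lam : ℝ, 0 < N lam := fun lam => lt_of_lt_of_le one_pos (hNge lam)
  -- expansion identities
  have hexp1 : ∀ lam : ℝ, ip (s + lam • e) (s + lam • e)
      = ip s (s + lam • e) + lam * ip e (s + lam • e) := by
    intro lam
    rw [h_add, h_sm1]
  have hexp2 : ∀ lam : ℝ, ip (s + lam • e) s = ip s s + lam * ip e s := by
    intro lam
    rw [h_add, h_sm1]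
  -- inequality (I): lam * ip e s ≤ N0 * (N lam - N0)
  have hI : ∀ lam : ℝ, lam * ip e s ≤ N0 * (N lam - N0) := by
    intro lam
    have h1 : ip (s + lam • e) s + 1 ≤ N lam * N0 := ecs (s + lam • e) s
    rw [hexp2 lam] at h1
    nlinarith [hN0sq]
  -- inequality (II): N lam * (N lam - N0) ≤ lam * ip e (s + lam • e)
  have hII : ∀ lam : ℝ, N lam * (N lam - N0) ≤ lam * ip e (s + lam • e) := by
    intro lam
    have h1 : ip s (s + lam • e) + 1 ≤ N0 * N lam := ecs s (s + lam • e)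
    nlinarith [hNsq lam, hexp1 lam]
  -- bound |ip e (s + lam • e)| ≤ C * N lam
  have hPbd : ∀ lam : ℝ, |ip e (s + lam • e)| ≤ C * N lam := by
    intro lam
    calc |ip e (s + lam • e)| ≤ C * Real.sqrt (ip (s + lam • e) (s + lam • e)) :=
          cs' e (s + lam • e)
      _ ≤ C * N lam := by
          apply mul_le_mul_of_nonneg_left _ hCnn
          exact Real.sqrt_le_sqrt (by linarith)
  -- bound |ip e s| ≤ C * N0
  have hP0bd : |ip e s| ≤ C * N0 := by
    calc |ip e s| ≤ C * Real.sqrt (ip s s) := cs' e s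
      _ ≤ C * N0 := by
          apply mul_le_mul_of_nonneg_left _ hCnn
          exact Real.sqrt_le_sqrt (by linarith)
  -- Lipschitz: |N lam - N0| ≤ |lam| * C
  have hLip : ∀ lam : ℝ, |N lam - N0| ≤ |lam| * C := by
    intro lam
    rw [abs_le]
    constructor
    · -- from (I)
      have h1 : lam * ip e s ≤ N0 * (N lam - N0) := hI lam
      have h2 : -(|lam| * (C * N0)) ≤ lam * ip e s := by
        have h3 : |lam * ip e s| ≤ |lam| * (C * N0) := by
          rw [abs_mul]
          exact mul_le_mul_of_nonneg_left hP0bd (abs_nonneg lam)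
        linarith [neg_abs_le (lam * ip e s)]
      have h4 : -(|lam| * C) * N0 ≤ (N lam - N0) * N0 := by
        nlinarith
      have := le_of_mul_le_mul_right h4 hN0pos
      linarith
    · -- from (II)
      have h1 : N lam * (N lam - N0) ≤ lam * ip e (s + lam • e) := hII lam
      have h2 : lam * ip e (s + lam • e) ≤ |lam| * (C * N lam) := by
        calc lam * ip e (s + lam • e) ≤ |lam * ip e (s + lam • e)| := le_abs_self _
          _ = |lam| * |ip e (s + lam • e)| := abs_mul _ _
          _ ≤ |lam| * (C * N lam) :=
              mul_le_mul_of_nonneg_left (hPbd lam) (abs_nonneg lam)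
      have h3 : N lam * (N lam - N0) ≤ N lam * (|lam| * C) := by
        nlinarith [hNpos lam]
      exact le_of_mul_le_mul_left h3 (hNpos lam)
  -- N tends to N0
  have hNt : Tendsto N (𝓝 0) (𝓝 N0) := by
    have h0 : Tendsto (fun lam : ℝ => N lam - N0) (𝓝 0) (𝓝 0) := by
      apply squeeze_zero_norm (fun lam => hLip lam)
      have : Tendsto (fun lam : ℝ => |lam| * C) (𝓝 0) (𝓝 (|(0:ℝ)| * C)) :=
        (continuous_abs.tendsto 0).mul tendsto_const_nhds
      simpa using this
    have := h0.add (tendsto_const_nhds (x := N0))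
    simpa using this
  -- the ratio R tends to L
  have hRt : Tendsto (fun lam : ℝ => ip e (s + lam • e) / N lam) (𝓝 0) (𝓝 L) := by
    exact (h_cont e s).div hNt (ne_of_gt hN0pos)
  -- squeeze on the punctured neighborhood
  have hbound : ∀ lam : ℝ, lam ≠ 0 →
      |(N lam - N0) / lam - L| ≤ |ip e (s + lam • e) / N lam - L| := by
    intro lam hlam
    set R : ℝ := ip e (s + lam • e) / N lam with hRdef
    rcases lt_or_gt_of_ne hlam with hneg | hpos
    · -- lam < 0 : R ≤ q ≤ L
      have hq1 : (N lam - N0) / lam ≤ L := by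
        rw [div_le_iff_of_neg hneg, hLdef, div_mul_eq_mul_div, div_le_iff₀ hN0pos]
        nlinarith [hI lam]
      have hq2 : R ≤ (N lam - N0) / lam := by
        rw [le_div_iff_of_neg hneg, hRdef, div_mul_eq_mul_div, le_div_iff₀ (hNpos lam)]
        nlinarith [hII lam]
      rw [abs_of_nonpos (by linarith)]
      calc -((N lam - N0) / lam - L) ≤ -(R - L) := by linarith
        _ ≤ |R - L| := by rw [← abs_neg]; exact le_abs_self _
    · -- lam > 0 : L ≤ q ≤ R
      have hq1 : L ≤ (N lam - N0) / lam := by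
        rw [hLdef, div_le_div_iff₀ hN0pos hpos]
        nlinarith [hI lam]
      have hq2 : (N lam - N0) / lam ≤ R := by
        rw [hRdef, div_le_div_iff₀ hpos (hNpos lam)]
        nlinarith [hII lam]
      rw [abs_of_nonneg (by linarith)]
      calc (N lam - N0) / lam - L ≤ R - L := by linarith
        _ ≤ |R - L| := le_abs_self _
  have hRt' : Tendsto (fun lam : ℝ => |ip e (s + lam • e) / N lam - L|) (𝓝[≠] 0) (𝓝 0) := by
    have h1 : Tendsto (fun lam : ℝ => ip e (s + lam • e) / N lam - L) (𝓝[≠] 0) (𝓝 (L - L)) :=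
      ((hRt.mono_left nhdsWithin_le_nhds).sub tendsto_const_nhds)
    have := h1.abs
    simpa using this
  have hdiff : Tendsto (fun lam : ℝ => (N lam - N0) / lam - L) (𝓝[≠] 0) (𝓝 0) := by
    apply squeeze_zero_norm' _ hRt'
    filter_upwards [self_mem_nhdsWithin] with lam hlam
    exact hbound lam hlam
  have := hdiff.add (tendsto_const_nhds (x := L))
  simpa using this
end

section
/- Let S be a real vector space with a real s.i.p. [·,·], let V = S × ℝ carry the Minkowski product [(s₁,t₁),(s₂,t₂)]⁺ := [s₁,s₂] − t₁t₂, and let v = (s, √(1 + [s,s])) be a point of the upper sheet of the imaginary unit sphere H. Then a vector u = (s', t') ∈ V satisfies [u, v]⁺ = 0 if and only if t' = [s', s] / √(1 + [s,s]). Consequently the orthogonal complement v^⊥ = {u ∈ V : [u,v]⁺ = 0} coincides with the set of tangent vectors α(e, f'_e(s)) (α ∈ ℝ, e a unit vector of S) of the hypersurface H at v, where f(s) = √(1 + [s,s]) and f'_e(s) = [e,s]/√(1+[s,s]). -/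
/-- Let `v = (s, √(1+[s,s]))` be a point of the upper sheet of the imaginary unit sphere
of the generalized space-time model `S × ℝ`. A vector `u = (s',t')` is orthogonal to `v`
(`[u,v]⁺ = 0`) iff `t' = [s',s]/√(1+[s,s])`; consequently the orthogonal complement `v^⊥`
equals the set of tangent vectors `α·(e, f'_e(s))` (`α ∈ ℝ`, `e` a unit vector of `S`,
`f'_e(s) = [e,s]/√(1+[s,s])`) of the hypersurface `H` at `v`. -/
theorem stmt_11 {S : Type*} [AddCommGroup S] [Module ℝ S] [Nontrivial S]
    (ip : S → S → ℝ)
    (h_add : ∀ x y z : S, ip (x + y) z = ip x z + ip y z)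
    (h_sm1 : ∀ (c : ℝ) (x y : S), ip (c • x) y = c * ip x y)
    (h_sm2 : ∀ (c : ℝ) (x y : S), ip x (c • y) = c * ip x y)
    (h_pos : ∀ x : S, x ≠ 0 → 0 < ip x x)
    (h_cs : ∀ x y : S, ip x y ^ 2 ≤ ip x x * ip y y)
    (s : S) :
    (∀ (s' : S) (t' : ℝ),
      ip s' s - t' * Real.sqrt (1 + ip s s) = 0 ↔
        t' = ip s' s / Real.sqrt (1 + ip s s)) ∧
    {u : S × ℝ | ip u.1 s - u.2 * Real.sqrt (1 + ip s s) = 0} =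
      {u : S × ℝ | ∃ (α : ℝ) (e : S), ip e e = 1 ∧
        u = α • ((e, ip e s / Real.sqrt (1 + ip s s)) : S × ℝ)} := by
  have h0 : ∀ y : S, ip 0 y = 0 := fun y => by
    have := h_sm1 0 0 y; simpa using this
  have hss : 0 ≤ ip s s := by
    rcases eq_or_ne s 0 with h | h
    · simp [h, h0]
    · exact (h_pos s h).le
  have hpos : (0 : ℝ) < 1 + ip s s := by linarith
  have hr : 0 < Real.sqrt (1 + ip s s) := Real.sqrt_pos.mpr hpos
  set r := Real.sqrt (1 + ip s s) with hrdef
  have hiff : ∀ (s' : S) (t' : ℝ), ip s' s - t' * r = 0 ↔ t' = ip s' s / r := by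
    intro s' t'
    rw [sub_eq_zero, eq_div_iff hr.ne', eq_comm]
  refine ⟨hiff, ?_⟩
  ext ⟨s', t'⟩
  simp only [Set.mem_setOf_eq]
  constructor
  · intro h
    have ht' : t' = ip s' s / r := (hiff s' t').mp h
    rcases eq_or_ne s' 0 with h0' | h0'
    · -- need a unit vector
      obtain ⟨x, hx⟩ := exists_ne (0 : S)
      have hxx : 0 < ip x x := h_pos x hx
      set c := Real.sqrt (ip x x) with hc
      have hc0 : 0 < c := Real.sqrt_pos.mpr hxx
      refine ⟨0, c⁻¹ • x, ?_, ?_⟩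
      · have hc2 : c * c = ip x x := Real.mul_self_sqrt hxx.le
        rw [h_sm1, h_sm2]
        field_simp
        linarith
      · have : t' = 0 := by rw [ht', h0', h0, zero_div]
        simp [h0', this]
    · have hp : 0 < ip s' s' := h_pos s' h0'
      set α := Real.sqrt (ip s' s') with ha
      have hα : 0 < α := Real.sqrt_pos.mpr hp
      refine ⟨α, α⁻¹ • s', ?_, ?_⟩
      · have hc2 : α * α = ip s' s' := Real.mul_self_sqrt hp.le
        rw [h_sm1, h_sm2]
        field_simp
        linarith
      · rw [Prod.smul_mk]
        have h1 : α • α⁻¹ • s' = s' := by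
          rw [smul_smul, mul_inv_cancel₀ hα.ne', one_smul]
        rw [h1, ht', h_sm1]
        rw [Prod.mk.injEq]
        refine ⟨rfl, ?_⟩
        field_simp [hα.ne', hr.ne']
        rw [smul_eq_mul]
        field_simp
  · rintro ⟨α, e, he, huv⟩
    rw [Prod.smul_mk, Prod.mk.injEq] at huv
    obtain ⟨h1, h2⟩ := huv
    rw [h1, h2, h_sm1, smul_eq_mul]
    field_simp
    ring
end

section
/- Let S be a strictly convex real normed space. Then the real normed space V = S × ℝ with norm ‖(s,t)‖ := √(‖s‖² + t²) is strictly convex; that is, whenever ‖v + w‖ = ‖v‖ + ‖w‖ for nonzero v, w ∈ V, there is a real μ > 0 with w = μv. -/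
/-- If `S` is a strictly convex real normed space, then `V = S × ℝ` with the norm
`N(s,t) = √(‖s‖² + t²)` is strictly convex: whenever `N(v+w) = N(v) + N(w)` for nonzero
`v, w`, there is a real `μ > 0` with `w = μ•v`. -/
theorem stmt_13 {S : Type*} [NormedAddCommGroup S] [NormedSpace ℝ S]
    (hS : ∀ x y : S, x ≠ 0 → y ≠ 0 → ‖x + y‖ = ‖x‖ + ‖y‖ →
      ∃ μ : ℝ, 0 < μ ∧ y = μ • x)
    (N : S × ℝ → ℝ) (hN : ∀ p : S × ℝ, N p = Real.sqrt (‖p.1‖ ^ 2 + p.2 ^ 2)) :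
    ∀ v w : S × ℝ, v ≠ 0 → w ≠ 0 → N (v + w) = N v + N w →
      ∃ μ : ℝ, 0 < μ ∧ w = μ • v := by
  rintro ⟨s₁, t₁⟩ ⟨s₂, t₂⟩ hv hw heq
  set x : ℂ := ⟨‖s₁‖, t₁⟩ with hx
  set y : ℂ := ⟨‖s₂‖, t₂⟩ with hy
  have hxy : x + y = ⟨‖s₁‖ + ‖s₂‖, t₁ + t₂⟩ := by
    apply Complex.ext <;> simp [hx, hy]
  have hnx : ‖x‖ = N (s₁, t₁) := by
    rw [hN, Complex.norm_def, Complex.normSq_apply]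
    ring_nf
    rfl
  have hny : ‖y‖ = N (s₂, t₂) := by
    rw [hN, Complex.norm_def, Complex.normSq_apply]
    ring_nf
    rfl
  have hnxy : ‖x + y‖ = Real.sqrt ((‖s₁‖ + ‖s₂‖) ^ 2 + (t₁ + t₂) ^ 2) := by
    rw [hxy, Complex.norm_def, Complex.normSq_apply]
    ring_nf
  have hA : N ((s₁, t₁) + (s₂, t₂)) = Real.sqrt (‖s₁ + s₂‖ ^ 2 + (t₁ + t₂) ^ 2) := by
    rw [hN]; rfl
  have hle1 : N ((s₁, t₁) + (s₂, t₂)) ≤ ‖x + y‖ := by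
    rw [hA, hnxy]
    apply Real.sqrt_le_sqrt
    have := norm_add_le s₁ s₂
    nlinarith [norm_nonneg s₁, norm_nonneg s₂, norm_nonneg (s₁ + s₂)]
  have hle2 : ‖x + y‖ ≤ ‖x‖ + ‖y‖ := norm_add_le x y
  have hxyeq : ‖x + y‖ = ‖x‖ + ‖y‖ := by
    rw [hnx, hny]; rw [hnx, hny] at hle2
    linarith [heq ▸ hle1]
  have hAeq : N ((s₁, t₁) + (s₂, t₂)) = ‖x + y‖ := by
    rw [hxyeq, hnx, hny, heq]
  -- nonzeroness of x, y
  have hx0 : x ≠ 0 := by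
    intro h
    apply hv
    have h1 : ‖s₁‖ = 0 := congrArg Complex.re h
    have h2 : t₁ = 0 := congrArg Complex.im h
    simp [Prod.ext_iff, norm_eq_zero.mp h1, h2]
  have hy0 : y ≠ 0 := by
    intro h
    apply hw
    have h1 : ‖s₂‖ = 0 := congrArg Complex.re h
    have h2 : t₂ = 0 := congrArg Complex.im h
    simp [Prod.ext_iff, norm_eq_zero.mp h1, h2]
  -- same ray in ℂ
  have hray : SameRay ℝ x y := sameRay_iff_norm_add.mpr hxyeq
  obtain ⟨μ, hμ, hμxy⟩ := hray.exists_pos_left hx0 hy0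
  have hre : μ * ‖s₁‖ = ‖s₂‖ := by
    have := congrArg Complex.re hμxy
    simpa [Complex.smul_re, hx, hy] using this
  have him : μ * t₁ = t₂ := by
    have := congrArg Complex.im hμxy
    simpa [Complex.smul_im, hx, hy] using this
  -- norm equality in S
  have hnorms : ‖s₁ + s₂‖ = ‖s₁‖ + ‖s₂‖ := by
    have h1 : Real.sqrt (‖s₁ + s₂‖ ^ 2 + (t₁ + t₂) ^ 2)
        = Real.sqrt ((‖s₁‖ + ‖s₂‖) ^ 2 + (t₁ + t₂) ^ 2) := by
      rw [← hA, ← hnxy, hAeq]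
    have h2 : ‖s₁ + s₂‖ ^ 2 + (t₁ + t₂) ^ 2 = (‖s₁‖ + ‖s₂‖) ^ 2 + (t₁ + t₂) ^ 2 := by
      have := (Real.sqrt_inj (by positivity) (by positivity)).mp h1
      exact this
    nlinarith [norm_nonneg (s₁ + s₂), norm_nonneg s₁, norm_nonneg s₂]
  by_cases hs₁ : s₁ = 0
  · have hs₂ : s₂ = 0 := by
      rw [hs₁, norm_zero, mul_zero] at hre
      exact norm_eq_zero.mp hre.symm
    exact ⟨μ, hμ, by simp [hs₁, hs₂, Prod.ext_iff, Prod.smul_def, ← him]⟩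
  · have hs₂ : s₂ ≠ 0 := by
      intro h
      rw [h, norm_zero] at hre
      exact (norm_ne_zero_iff.mpr hs₁) (by nlinarith)
    obtain ⟨lam, hlam, hlameq⟩ := hS s₁ s₂ hs₁ hs₂ hnorms
    have : lam = μ := by
      have h1 : ‖s₂‖ = lam * ‖s₁‖ := by
        rw [hlameq, norm_smul, Real.norm_eq_abs, abs_of_pos hlam]
      have hn1 : ‖s₁‖ ≠ 0 := norm_ne_zero_iff.mpr hs₁
      have : lam * ‖s₁‖ = μ * ‖s₁‖ := by rw [← h1, hre]
      exact mul_right_cancel₀ hn1 this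
    refine ⟨μ, hμ, ?_⟩
    rw [Prod.ext_iff]
    constructor
    · rw [hlameq, this]; rfl
    · exact him.symm
end

section
/- Fix a real number α with 0 < α < 1 and define g : ℝ² → ℝ by g(x₁, x₂) := √( max(|x₁|, |x₂|)² − α²x₂² ). Then g(x) > 0 for every x ≠ 0 and g(λx) = |λ| g(x) for all real λ, but g is not subadditive: g((2,0)) = 2 > 2√(1 − α²) = g((1,1)) + g((1,−1)). Consequently the Cauchy–Schwarz inequality fails on this positive subspace: the Minkowski product of a generalized Minkowski space need not satisfy the Cauchy–Schwarz inequality on its positive subspaces. -/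
/-- For `0 < α < 1`, the function `g(x₁,x₂) = √(max(|x₁|,|x₂|)² - α²x₂²)` (the square-root
function of a Minkowski product restricted to a positive subspace of a generalized
Minkowski space) is positive on nonzero vectors and absolutely homogeneous, yet it fails
subadditivity: `g(2,0) = 2 > 2√(1-α²) = g(1,1) + g(1,-1)`. Hence the Cauchy–Schwarz
inequality fails on this positive subspace. -/
theorem stmt_15 (α : ℝ) (hα0 : 0 < α) (hα1 : α < 1)
    (g : ℝ × ℝ → ℝ)
    (hg : ∀ x : ℝ × ℝ, g x = Real.sqrt (max |x.1| |x.2| ^ 2 - α ^ 2 * x.2 ^ 2)) :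
    (∀ x : ℝ × ℝ, x ≠ 0 → 0 < g x) ∧
    (∀ (c : ℝ) (x : ℝ × ℝ), g (c • x) = |c| * g x) ∧
    g (2, 0) = 2 ∧
    g (1, 1) + g (1, -1) = 2 * Real.sqrt (1 - α ^ 2) ∧
    2 * Real.sqrt (1 - α ^ 2) < 2 ∧
    ¬ (∀ x y : ℝ × ℝ, g (x + y) ≤ g x + g y) := by
  have hlt : 2 * Real.sqrt (1 - α ^ 2) < 2 := by
    have h1 : Real.sqrt (1 - α ^ 2) < 1 := by
      have := Real.sqrt_lt_sqrt (by nlinarith : (0:ℝ) ≤ 1 - α ^ 2)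
        (by nlinarith : 1 - α ^ 2 < 1)
      simpa using this
    linarith
  have h11 : g (1, 1) = Real.sqrt (1 - α ^ 2) := by
    rw [hg]; norm_num
  have h1m1 : g (1, -1) = Real.sqrt (1 - α ^ 2) := by
    rw [hg]; norm_num
  have h20 : g (2, 0) = 2 := by
    rw [hg]
    norm_num
  refine ⟨?_, ?_, h20, by rw [h11, h1m1]; ring, hlt, ?_⟩
  · intro x hx
    rw [hg]
    apply Real.sqrt_pos.mpr
    have hm : 0 < max |x.1| |x.2| := by
      by_contra hc
      push_neg at hc
      have h1 : |x.1| ≤ 0 := le_trans (le_max_left _ _) hc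
      have h2 : |x.2| ≤ 0 := le_trans (le_max_right _ _) hc
      exact hx (Prod.ext (abs_nonpos_iff.mp h1) (abs_nonpos_iff.mp h2))
    have h2 : |x.2| ≤ max |x.1| |x.2| := le_max_right _ _
    nlinarith [sq_abs x.2, pow_le_pow_left₀ (abs_nonneg x.2) h2 2, mul_pos hm hm,
      sq_nonneg α, mul_pos (by linarith : (0:ℝ) < 1 - α) (by linarith : (0:ℝ) < 1 + α)]
  · intro c x
    rw [hg, hg]
    have : (c • x).1 = c * x.1 := rfl
    have h2 : (c • x).2 = c * x.2 := rfl
    rw [this, h2, abs_mul, abs_mul]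
    rw [show max (|c| * |x.1|) (|c| * |x.2|) = |c| * max |x.1| |x.2| from
      (mul_max_of_nonneg _ _ (abs_nonneg c)).symm]
    have : (|c| * max |x.1| |x.2|) ^ 2 - α ^ 2 * (c * x.2) ^ 2
        = c ^ 2 * (max |x.1| |x.2| ^ 2 - α ^ 2 * x.2 ^ 2) := by
      rw [mul_pow, sq_abs]; ring
    rw [this, Real.sqrt_mul (sq_nonneg c), Real.sqrt_sq_eq_abs]
  · intro h
    have := h (1, 1) (1, -1)
    rw [h11, h1m1] at this
    have hadd : ((1 : ℝ), (1 : ℝ)) + ((1 : ℝ), (-1 : ℝ)) = ((2 : ℝ), (0 : ℝ)) :=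
      Prod.ext (by norm_num) (by norm_num)
    rw [hadd, h20] at this
    linarith
end

section
/- Define a product on ℝ² by [u₁, u₂] := (x₁x₂ + 2y₁y₂) · (x₂² + y₂²)/(x₂² + 2y₂²) for u₂ = (x₂,y₂) ≠ 0 (and [u₁, 0] := 0), where uᵢ = (xᵢ, yᵢ). Then this product is linear in its first argument, homogeneous in its second argument ([u₁, λu₂] = λ[u₁,u₂] for real λ), and satisfies [u,u] = x² + y² = ‖u‖² for the Euclidean norm; nevertheless the Cauchy–Schwarz inequality fails for it: [(1,2),(1,1)] = 10/3 > √10 = √([(1,2),(1,2)]) · √([(1,1),(1,1)]). -/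
lemma vne {v : ℝ × ℝ} (hv : v ≠ 0) : v.1 ^ 2 + 2 * v.2 ^ 2 ≠ 0 := by
  intro h
  apply hv
  have h1 : v.1 ^ 2 = 0 ∧ v.2 ^ 2 = 0 := by constructor <;> nlinarith [sq_nonneg v.1, sq_nonneg v.2]
  have := pow_eq_zero_iff (n := 2) (by norm_num) |>.mp h1.1
  have := pow_eq_zero_iff (n := 2) (by norm_num) |>.mp h1.2
  exact Prod.ext ‹v.1 = 0› ‹v.2 = 0›

/-- The product `[u₁,u₂] = (x₁x₂ + 2y₁y₂)·(x₂² + y₂²)/(x₂² + 2y₂²)` on `ℝ²` is linear in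
its first argument, homogeneous in its second argument, and associated to the Euclidean
norm (`[u,u] = ‖u‖²`); nevertheless the Cauchy–Schwarz inequality fails for it:
`[(1,2),(1,1)] = 10/3 > √10 = √[(1,2),(1,2)]·√[(1,1),(1,1)]`. -/
theorem stmt_16 (p : ℝ × ℝ → ℝ × ℝ → ℝ)
    (hp : ∀ u v : ℝ × ℝ, v ≠ 0 →
      p u v = (u.1 * v.1 + 2 * u.2 * v.2) * ((v.1 ^ 2 + v.2 ^ 2) / (v.1 ^ 2 + 2 * v.2 ^ 2)))
    (hp0 : ∀ u : ℝ × ℝ, p u 0 = 0) :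
    (∀ u u' v : ℝ × ℝ, p (u + u') v = p u v + p u' v) ∧
    (∀ (c : ℝ) (u v : ℝ × ℝ), p (c • u) v = c * p u v) ∧
    (∀ (c : ℝ) (u v : ℝ × ℝ), p u (c • v) = c * p u v) ∧
    (∀ u : ℝ × ℝ, p u u = u.1 ^ 2 + u.2 ^ 2) ∧
    p (1, 2) (1, 1) = 10 / 3 ∧
    Real.sqrt (p (1, 2) (1, 2)) * Real.sqrt (p (1, 1) (1, 1)) = Real.sqrt 10 ∧
    Real.sqrt 10 < 10 / 3 := by
  refine ⟨?_, ?_, ?_, ?_, ?_, ?_, ?_⟩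
  · intro u u' v
    by_cases hv : v = 0
    · simp [hv, hp0]
    · rw [hp _ _ hv, hp _ _ hv, hp _ _ hv]
      simp only [Prod.fst_add, Prod.snd_add]
      ring
  · intro c u v
    by_cases hv : v = 0
    · simp [hv, hp0]
    · rw [hp _ _ hv, hp _ _ hv]
      simp only [Prod.smul_fst, Prod.smul_snd, smul_eq_mul]
      ring
  · intro c u v
    by_cases hv : v = 0
    · simp [hv, hp0]
    · by_cases hc : c = 0
      · rw [hc]
        simp [hp0, hp _ _ hv]
      · have hcv : c • v ≠ 0 := smul_ne_zero hc hv
        rw [hp _ _ hcv, hp _ _ hv]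
        simp only [Prod.smul_fst, Prod.smul_snd, smul_eq_mul]
        have hc2 : c ^ 2 ≠ 0 := pow_ne_zero _ hc
        have key : ((c * v.1) ^ 2 + (c * v.2) ^ 2) / ((c * v.1) ^ 2 + 2 * (c * v.2) ^ 2)
            = (v.1 ^ 2 + v.2 ^ 2) / (v.1 ^ 2 + 2 * v.2 ^ 2) := by
          rw [show (c * v.1) ^ 2 + (c * v.2) ^ 2 = c ^ 2 * (v.1 ^ 2 + v.2 ^ 2) by ring,
            show (c * v.1) ^ 2 + 2 * (c * v.2) ^ 2 = c ^ 2 * (v.1 ^ 2 + 2 * v.2 ^ 2) by ring,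
            mul_div_mul_left _ _ hc2]
        rw [key]; ring
  · intro u
    by_cases hu : u = 0
    · simp [hu, hp0]
    · rw [hp _ _ hu]
      have := vne hu
      field_simp
  · rw [hp _ _ (by simp [Prod.ext_iff])]
    norm_num
  · rw [hp _ _ (by simp [Prod.ext_iff]), hp _ _ (by simp [Prod.ext_iff])]
    norm_num
    rw [← Real.sqrt_mul (by norm_num)]
    norm_num
  · rw [show (10 : ℝ) / 3 = Real.sqrt ((10/3)^2) by rw [Real.sqrt_sq (by norm_num)]]
    apply Real.sqrt_lt_sqrt (by norm_num)
    norm_num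
end

section
/- Let V be a complex normed space and let [·,·] be an s.i.p. on V with [x,x] = ‖x‖² that is additive in its second argument ([x, y+z] = [x,y] + [x,z] for all x,y,z). Assume the s.i.p. representation of the norm is unique: every map [·,·]' : V × V → ℂ satisfying the s.i.p. axioms (s1)–(s5) with [x,x]' = ‖x‖² for all x equals [·,·]. Then [x,y] = conjugate([y,x]) for all x, y ∈ V; hence [·,·] is an inner product and V is an inner product space. -/
/-- If a complex normed space `V` carries an s.i.p. `ip` representing the norm
(`[x,x] = ‖x‖²`) which is additive in its second argument, and if the s.i.p.
representation of the norm is unique, then `ip` is conjugate-symmetric; hence it is an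
inner product and the norm satisfies the parallelogram law, so `V` is an inner product
space. -/
theorem stmt_17 {V : Type*} [NormedAddCommGroup V] [NormedSpace ℂ V]
    (ip : V → V → ℂ)
    (h_add : ∀ x y z : V, ip (x + y) z = ip x z + ip y z)
    (h_sm1 : ∀ (c : ℂ) (x y : V), ip (c • x) y = c * ip x y)
    (h_pos : ∀ x : V, x ≠ 0 → 0 < (ip x x).re ∧ (ip x x).im = 0)
    (h_cs : ∀ x y : V, ‖ip x y‖ ^ 2 ≤ (ip x x).re * (ip y y).re)
    (h_sm2 : ∀ (c : ℂ) (x y : V), ip x (c • y) = (starRingEnd ℂ) c * ip x y)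
    (h_norm : ∀ x : V, ip x x = (‖x‖ ^ 2 : ℂ))
    (h_add2 : ∀ x y z : V, ip x (y + z) = ip x y + ip x z)
    (h_unique : ∀ ip' : V → V → ℂ,
      (∀ x y z : V, ip' (x + y) z = ip' x z + ip' y z) →
      (∀ (c : ℂ) (x y : V), ip' (c • x) y = c * ip' x y) →
      (∀ x : V, x ≠ 0 → 0 < (ip' x x).re ∧ (ip' x x).im = 0) →
      (∀ x y : V, ‖ip' x y‖ ^ 2 ≤ (ip' x x).re * (ip' y y).re) →
      (∀ (c : ℂ) (x y : V), ip' x (c • y) = (starRingEnd ℂ) c * ip' x y) →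
      (∀ x : V, ip' x x = (‖x‖ ^ 2 : ℂ)) → ip' = ip) :
    (∀ x y : V, ip x y = (starRingEnd ℂ) (ip y x)) ∧
    (∀ x y : V, ‖x + y‖ ^ 2 + ‖x - y‖ ^ 2 = 2 * ‖x‖ ^ 2 + 2 * ‖y‖ ^ 2) := by

  have hsym : ∀ x y : V, ip x y = (starRingEnd ℂ) (ip y x) := by
    have h := h_unique (fun x y => (starRingEnd ℂ) (ip y x))
      (by intro x y z; simp [h_add2])
      (by intro c x y; simp [h_sm2])
      (by
        intro x hx
        rcases h_pos x hx with ⟨h1, h2⟩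
        simpa using ⟨h1, h2⟩)
      (by
        intro x y
        simpa [mul_comm] using h_cs y x)
      (by intro c x y; simp [h_sm1])
      (by intro x; simp [h_norm x])
    intro x y
    have := congrFun (congrFun h x) y
    exact this.symm
  refine ⟨hsym, fun x y => ?_⟩
  have hneg : ∀ a b : V, ip a (-b) = -ip a b := by
    intro a b
    have := h_sm2 (-1 : ℂ) a b
    simpa using this
  have key : (↑(‖x + y‖ ^ 2) : ℂ) + ↑(‖x - y‖ ^ 2) = 2 * ↑(‖x‖ ^ 2) + 2 * ↑(‖y‖ ^ 2) := by
    have e1 : (↑(‖x + y‖ ^ 2) : ℂ) = ip (x + y) (x + y) := by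
      rw [h_norm]; push_cast; ring
    have e2 : (↑(‖x - y‖ ^ 2) : ℂ) = ip (x - y) (x - y) := by
      rw [h_norm]; push_cast; ring
    have e3 : (↑(‖x‖ ^ 2) : ℂ) = ip x x := by rw [h_norm]; push_cast; ring
    have e4 : (↑(‖y‖ ^ 2) : ℂ) = ip y y := by rw [h_norm]; push_cast; ring
    rw [e1, e2, e3, e4]
    have d1 : ip (x + y) (x + y) = ip x x + ip x y + ip y x + ip y y := by
      rw [h_add, h_add2, h_add2]; ring
    have d2 : ip (x - y) (x - y) = ip x x - ip x y - ip y x + ip y y := by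
      have : ip (x - y) (x - y) = ip x (x + -y) + ip (-y) (x + -y) := by
        rw [sub_eq_add_neg, h_add]
      rw [this, h_add2, h_add2, hneg]
      have hnegl : ∀ a b : V, ip (-a) b = -ip a b := by
        intro a b
        have := h_sm1 (-1 : ℂ) a b
        simpa using this
      rw [hnegl, hnegl, hneg]
      ring
    rw [d1, d2]; ring
  have := congrArg Complex.re key
  exact_mod_cast this
end

section
/- Let V be a complex vector space with an s.i.p. [·,·] and associated norm ‖x‖ = √([x,x]), and let x, y ∈ V with y ≠ 0. Then the one-sided derivatives (‖·‖'_x(y))⁻ := lim_{λ→0⁻} (‖y+λx‖ − ‖y‖)/λ and (‖·‖'_x(y))⁺ := lim_{λ→0⁺} (‖y+λx‖ − ‖y‖)/λ (λ real) exist and satisfy ‖y‖·(‖·‖'_x(y))⁻ ≤ Re[x,y] ≤ ‖y‖·(‖·‖'_x(y))⁺. In particular, if the norm is Gâteaux differentiable at y in direction x, then Re[x,y] = ‖y‖·‖·‖'_x(y). -/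
open Topology Filter

/-- In a complex s.i.p. space with norm `nrm x = √(Re[x,x])`, for `y ≠ 0` the one-sided
derivatives of `λ ↦ ‖y + λx‖` at `0` exist and satisfy
`‖y‖·(‖·‖'_x(y))⁻ ≤ Re[x,y] ≤ ‖y‖·(‖·‖'_x(y))⁺`; in particular if the norm is Gâteaux
differentiable at `y` in direction `x` with derivative `d` then `Re[x,y] = ‖y‖·d`. -/
theorem stmt_18 {V : Type*} [AddCommGroup V] [Module ℂ V] (ip : V → V → ℂ)
    (nrm : V → ℝ) (hnrm : ∀ x, nrm x = Real.sqrt (ip x x).re)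
    (h_add : ∀ x y z : V, ip (x + y) z = ip x z + ip y z)
    (h_sm1 : ∀ (c : ℂ) (x y : V), ip (c • x) y = c * ip x y)
    (h_pos : ∀ x : V, x ≠ 0 → 0 < (ip x x).re ∧ (ip x x).im = 0)
    (h_cs : ∀ x y : V, ‖ip x y‖ ^ 2 ≤ (ip x x).re * (ip y y).re)
    (h_sm2 : ∀ (c : ℂ) (x y : V), ip x (c • y) = (starRingEnd ℂ) c * ip x y)
    (x y : V) (hy : y ≠ 0) :
    ∃ dm dp : ℝ,
      Tendsto (fun lam : ℝ => (nrm (y + (lam : ℂ) • x) - nrm y) / lam) (𝓝[<] 0) (𝓝 dm) ∧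
      Tendsto (fun lam : ℝ => (nrm (y + (lam : ℂ) • x) - nrm y) / lam) (𝓝[>] 0) (𝓝 dp) ∧
      nrm y * dm ≤ (ip x y).re ∧ (ip x y).re ≤ nrm y * dp ∧
      ∀ d : ℝ,
        Tendsto (fun lam : ℝ => (nrm (y + (lam : ℂ) • x) - nrm y) / lam) (𝓝[≠] 0) (𝓝 d) →
        (ip x y).re = nrm y * d := by
  -- basic facts
  have hip0 : ∀ z : V, ip 0 z = 0 := by
    intro z
    have h := h_add 0 0 z
    rw [add_zero] at h
    linear_combination -h
  have hre_nonneg : ∀ z : V, 0 ≤ (ip z z).re := by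
    intro z
    by_cases hz : z = 0
    · subst hz; simp [hip0]
    · exact (h_pos z hz).1.le
  have hnrm_nonneg : ∀ z : V, 0 ≤ nrm z := fun z => by
    rw [hnrm]; exact Real.sqrt_nonneg _
  have hnrm_sq : ∀ z : V, nrm z ^ 2 = (ip z z).re := fun z => by
    rw [hnrm]; exact Real.sq_sqrt (hre_nonneg z)
  -- Cauchy–Schwarz in nrm form
  have habs : ∀ a b : V, ‖ip a b‖ ≤ nrm a * nrm b := by
    intro a b
    have h1 := h_cs a b
    have h2 : (nrm a * nrm b) ^ 2 = (ip a a).re * (ip b b).re := by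
      rw [mul_pow, hnrm_sq, hnrm_sq]
    have h3 : ‖ip a b‖ ^ 2 ≤ (nrm a * nrm b) ^ 2 := by rw [h2]; exact h1
    exact (pow_le_pow_iff_left₀ (norm_nonneg _)
      (mul_nonneg (hnrm_nonneg a) (hnrm_nonneg b)) two_ne_zero).mp h3
  -- triangle inequality
  have htri : ∀ a b : V, nrm (a + b) ≤ nrm a + nrm b := by
    intro a b
    have hexp : ip (a + b) (a + b) = ip a (a + b) + ip b (a + b) := h_add a b (a + b)
    have hre : (ip (a + b) (a + b)).re = (ip a (a + b)).re + (ip b (a + b)).re := by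
      rw [hexp]; simp
    have h1 : (ip a (a + b)).re ≤ nrm a * nrm (a + b) :=
      le_trans (Complex.re_le_norm _) (habs a (a + b))
    have h2 : (ip b (a + b)).re ≤ nrm b * nrm (a + b) :=
      le_trans (Complex.re_le_norm _) (habs b (a + b))
    have hsq : nrm (a + b) ^ 2 ≤ (nrm a + nrm b) * nrm (a + b) := by
      rw [hnrm_sq, hre]; nlinarith
    rcases (hnrm_nonneg (a + b)).eq_or_lt with h | h
    · rw [← h]; exact add_nonneg (hnrm_nonneg a) (hnrm_nonneg b)
    · nlinarith
  -- homogeneity for real scalars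
  have hhom : ∀ (r : ℝ) (v : V), nrm ((r : ℂ) • v) = |r| * nrm v := by
    intro r v
    have : ip ((r : ℂ) • v) ((r : ℂ) • v) = (r : ℂ) * ((starRingEnd ℂ) (r : ℂ) * ip v v) := by
      rw [h_sm1, h_sm2]
    have hre : (ip ((r : ℂ) • v) ((r : ℂ) • v)).re = r ^ 2 * (ip v v).re := by
      rw [this, Complex.conj_ofReal, ← mul_assoc, ← Complex.ofReal_mul,
        Complex.re_ofReal_mul]
      ring
    rw [hnrm, hnrm, hre]
    rw [Real.sqrt_mul (by positivity), Real.sqrt_sq_eq_abs]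
  -- the function and its convexity
  set f : ℝ → ℝ := fun lam => nrm (y + (lam : ℂ) • x) with hf
  have hf0 : f 0 = nrm y := by simp [hf]
  have hconv : ConvexOn ℝ Set.univ f := by
    refine ⟨convex_univ, fun u _ v _ a b ha hb hab => ?_⟩
    have habC : (a : ℂ) + (b : ℂ) = 1 := by exact_mod_cast congrArg (Complex.ofReal) hab
    have hdecomp : y + ((a • u + b • v : ℝ) : ℂ) • x
        = (a : ℂ) • (y + (u : ℂ) • x) + (b : ℂ) • (y + (v : ℂ) • x) := by
      have hcast : ((a • u + b • v : ℝ) : ℂ) = (a : ℂ) * (u : ℂ) + (b : ℂ) * (v : ℂ) := by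
        push_cast [smul_eq_mul]; ring
      have hy1 : (a : ℂ) • y + (b : ℂ) • y = y := by
        rw [← add_smul, habC, one_smul]
      rw [hcast, smul_add, smul_add, smul_smul, smul_smul, add_smul]
      conv_lhs => rw [← hy1]
      abel
    calc f (a • u + b • v) = nrm ((a : ℂ) • (y + (u : ℂ) • x) + (b : ℂ) • (y + (v : ℂ) • x)) := by
          rw [hf]; simp only; rw [hdecomp]
      _ ≤ nrm ((a : ℂ) • (y + (u : ℂ) • x)) + nrm ((b : ℂ) • (y + (v : ℂ) • x)) := htri _ _
      _ = a * f u + b * f v := by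
          rw [hhom, hhom, abs_of_nonneg ha, abs_of_nonneg hb]
  -- the difference quotient equals the slope of f at 0
  set g : ℝ → ℝ := fun lam => (nrm (y + (lam : ℂ) • x) - nrm y) / lam with hg
  have hgs : ∀ lam : ℝ, g lam = slope f 0 lam := by
    intro lam
    rw [slope_def_field, hf0, sub_zero]
  have hmono : MonotoneOn g (Set.univ \ {0}) := by
    intro a ha b hb hab
    rw [hgs a, hgs b]
    exact hconv.slope_mono (Set.mem_univ 0) ha hb hab
  -- positivity of nrm y
  have hny : 0 < nrm y := by
    rw [hnrm]; exact Real.sqrt_pos.mpr (h_pos y hy).1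
  -- key inequality
  have hkey : ∀ lam : ℝ, lam * (ip x y).re ≤ nrm y * (nrm (y + (lam : ℂ) • x) - nrm y) := by
    intro lam
    have hexp : ip (y + (lam : ℂ) • x) y = ip y y + (lam : ℂ) * ip x y := by
      rw [h_add, h_sm1]
    have hre : (ip (y + (lam : ℂ) • x) y).re = (ip y y).re + lam * (ip x y).re := by
      rw [hexp]; simp [Complex.add_re, Complex.re_ofReal_mul]
    have h1 : (ip (y + (lam : ℂ) • x) y).re ≤ nrm (y + (lam : ℂ) • x) * nrm y :=
      le_trans (Complex.re_le_norm _) (habs _ _)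
    have h2 : nrm y ^ 2 = (ip y y).re := hnrm_sq y
    nlinarith
  set c : ℝ := (ip x y).re / nrm y with hc
  have hgc_pos : ∀ lam : ℝ, 0 < lam → c ≤ g lam := by
    intro lam hl
    rw [hc, hg]
    rw [div_le_div_iff₀ hny hl]
    have := hkey lam
    nlinarith
  have hgc_neg : ∀ lam : ℝ, lam < 0 → g lam ≤ c := by
    intro lam hl
    rw [hc, hg]
    rw [div_le_iff_of_neg hl, div_mul_eq_mul_div, div_le_iff₀ hny]
    have := hkey lam
    nlinarith
  -- right limit
  have hmonoIoi : MonotoneOn g (Set.Ioi (0 : ℝ)) :=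
    hmono.mono (fun z hz => ⟨Set.mem_univ z, ne_of_gt hz⟩)
  have hbddIoi : BddBelow (g '' Set.Ioi (0 : ℝ)) := by
    refine ⟨c, fun w hw => ?_⟩
    obtain ⟨lam, hl, rfl⟩ := hw
    exact hgc_pos lam hl
  have hdp : Tendsto g (𝓝[>] 0) (𝓝 (sInf (g '' Set.Ioi 0))) :=
    hmonoIoi.tendsto_nhdsGT hbddIoi
  -- left limit
  have hmonoIio : MonotoneOn g (Set.Iio (0 : ℝ)) :=
    hmono.mono (fun z hz => ⟨Set.mem_univ z, ne_of_lt hz⟩)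
  have hbddIio : BddAbove (g '' Set.Iio (0 : ℝ)) := by
    refine ⟨c, fun w hw => ?_⟩
    obtain ⟨lam, hl, rfl⟩ := hw
    exact hgc_neg lam hl
  have hdm : Tendsto g (𝓝[<] 0) (𝓝 (sSup (g '' Set.Iio 0))) :=
    hmonoIio.tendsto_nhdsLT hbddIio
  set dp := sInf (g '' Set.Ioi (0 : ℝ)) with hdpdef
  set dm := sSup (g '' Set.Iio (0 : ℝ)) with hdmdef
  have hcdp : c ≤ dp := by
    refine le_csInf ⟨g 1, Set.mem_image_of_mem _ (by norm_num)⟩ ?_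
    rintro w ⟨lam, hl, rfl⟩
    exact hgc_pos lam hl
  have hdmc : dm ≤ c := by
    refine csSup_le ⟨g (-1), Set.mem_image_of_mem _ (by norm_num)⟩ ?_
    rintro w ⟨lam, hl, rfl⟩
    exact hgc_neg lam hl
  have hnc : nrm y * c = (ip x y).re := by
    rw [hc, mul_div_cancel₀ _ (ne_of_gt hny)]
  refine ⟨dm, dp, hdm, hdp, ?_, ?_, ?_⟩
  · calc nrm y * dm ≤ nrm y * c := by nlinarith
      _ = (ip x y).re := hnc
  · calc (ip x y).re = nrm y * c := hnc.symm
      _ ≤ nrm y * dp := by nlinarith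
  · intro d hd
    have hlt : Tendsto g (𝓝[<] 0) (𝓝 d) :=
      hd.mono_left (nhdsWithin_mono 0 (fun z hz => ne_of_lt hz))
    have hgt : Tendsto g (𝓝[>] 0) (𝓝 d) :=
      hd.mono_left (nhdsWithin_mono 0 (fun z hz => ne_of_gt hz))
    have h1 : d = dm := tendsto_nhds_unique hlt hdm
    have h2 : d = dp := tendsto_nhds_unique hgt hdp
    have hle1 : nrm y * dm ≤ (ip x y).re := by nlinarith
    have hle2 : (ip x y).re ≤ nrm y * dp := by nlinarith
    rw [h1] at h2
    nlinarith
end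

section
/- Let S be a real vector space with a real s.i.p. [·,·] and associated norm ‖x‖ = √([x,x]). Then the normed space (S, ‖·‖) is strictly convex if and only if the following equality condition holds: whenever [x,y] = ‖x‖·‖y‖ for nonzero x, y ∈ S, there exists a real λ > 0 with y = λx. -/
/-- (Berkson) A real s.i.p. space with norm `nrm x = √[x,x]` is strictly convex (equality
`nrm(x+y) = nrm x + nrm y` for nonzero `x, y` forces `y = λx` with `λ > 0`) if and only if
whenever `[x,y] = nrm x · nrm y` for nonzero `x, y` there exists `λ > 0` with `y = λx`. -/
theorem stmt_19 {S : Type*} [AddCommGroup S] [Module ℝ S]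
    (ip : S → S → ℝ)
    (h_add : ∀ x y z : S, ip (x + y) z = ip x z + ip y z)
    (h_sm1 : ∀ (c : ℝ) (x y : S), ip (c • x) y = c * ip x y)
    (h_sm2 : ∀ (c : ℝ) (x y : S), ip x (c • y) = c * ip x y)
    (h_pos : ∀ x : S, x ≠ 0 → 0 < ip x x)
    (h_cs : ∀ x y : S, ip x y ^ 2 ≤ ip x x * ip y y)
    (nrm : S → ℝ) (hnrm : ∀ x, nrm x = Real.sqrt (ip x x)) :
    (∀ x y : S, x ≠ 0 → y ≠ 0 → nrm (x + y) = nrm x + nrm y →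
      ∃ c : ℝ, 0 < c ∧ y = c • x) ↔
    (∀ x y : S, x ≠ 0 → y ≠ 0 → ip x y = nrm x * nrm y →
      ∃ c : ℝ, 0 < c ∧ y = c • x) := by
  have hz : ∀ y : S, ip 0 y = 0 := by
    intro y
    have h := h_add 0 0 y
    rw [add_zero] at h
    linarith
  have hnn : ∀ x : S, 0 ≤ ip x x := by
    intro x
    by_cases h : x = 0
    · subst h; rw [hz]
    · exact (h_pos x h).le
  have hsq : ∀ x : S, nrm x ^ 2 = ip x x := by
    intro x; rw [hnrm]; exact Real.sq_sqrt (hnn x)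
  have hnrm_nn : ∀ x : S, 0 ≤ nrm x := by
    intro x; rw [hnrm]; exact Real.sqrt_nonneg _
  have hnrm_pos : ∀ x : S, x ≠ 0 → 0 < nrm x := by
    intro x hx; rw [hnrm]; exact Real.sqrt_pos.mpr (h_pos x hx)
  have hcs : ∀ x y : S, ip x y ≤ nrm x * nrm y := by
    intro x y
    have h1 := h_cs x y
    have h2 := hsq x
    have h3 := hsq y
    nlinarith [hnrm_nn x, hnrm_nn y, mul_nonneg (hnrm_nn x) (hnrm_nn y),
      sq_nonneg (ip x y - nrm x * nrm y), sq_nonneg (ip x y + nrm x * nrm y)]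
  have hsmul_nrm : ∀ (c : ℝ) (x : S), 0 ≤ c → nrm (c • x) = c * nrm x := by
    intro c x hc
    rw [hnrm, hnrm, h_sm1, h_sm2, show c * (c * ip x x) = c ^ 2 * ip x x by ring,
      Real.sqrt_mul (sq_nonneg c), Real.sqrt_sq hc]
  have htri : ∀ x y : S, nrm (x + y) ≤ nrm x + nrm y := by
    intro x y
    by_cases h : x + y = 0
    · rw [h, hnrm, hz, Real.sqrt_zero]
      exact add_nonneg (hnrm_nn x) (hnrm_nn y)
    · have hN := hnrm_pos _ h
      have h1 := hcs x (x + y)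
      have h2 := hcs y (x + y)
      have h3 : ip x (x + y) + ip y (x + y) = ip (x + y) (x + y) := (h_add x y (x + y)).symm
      have h4 := hsq (x + y)
      nlinarith
  constructor
  · intro hsc x y hx hy hip
    have hxp := hnrm_pos x hx
    have hyp := hnrm_pos y hy
    have hxy : x + y ≠ 0 := by
      intro h
      have h1 : ip (x + y) y = ip x y + ip y y := h_add x y y
      rw [h, hz] at h1
      have := h_pos y hy
      nlinarith
    have hge : nrm x + nrm y ≤ nrm (x + y) := by
      have h1 : ip (x + y) y = ip x y + ip y y := h_add x y y
      have h2 := hcs (x + y) y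
      have h3 := hsq y
      nlinarith
    exact hsc x y hx hy (le_antisymm (htri x y) hge)
  · intro hip x y hx hy heq
    have hxp := hnrm_pos x hx
    have hyp := hnrm_pos y hy
    have hxy : x + y ≠ 0 := by
      intro h
      rw [h, hnrm, hz, Real.sqrt_zero] at heq
      linarith
    have hN := hnrm_pos _ hxy
    have ha := hcs x (x + y)
    have hb := hcs y (x + y)
    have hc : ip x (x + y) + ip y (x + y) = ip (x + y) (x + y) := (h_add x y (x + y)).symm
    have hd := hsq (x + y)
    have e1 : ip x (x + y) = nrm x * nrm (x + y) := by nlinarith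
    obtain ⟨c, hc0, hcx⟩ := hip x (x + y) hx hxy e1
    have hnc : nrm (x + y) = c * nrm x := by rw [hcx, hsmul_nrm c x hc0.le]
    have hc1 : 1 < c := by nlinarith
    exact ⟨c - 1, by linarith, by
      rw [sub_smul, one_smul, ← hcx]; abel⟩
end
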